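/- Let L be a finite meet-semilattice and G a building set in L. Then the nested set complex N(L,G) is homotopy equivalent to the order complex Δ(L \ {0̂}). -/

import Mathlib

open scoped BigOperators

variable {L : Type*}

/-- The set of maximal elements of `G` below `X` (the `G`-factors of `X`). -/
def factorsSet [PartialOrder L] (G : Set L) (X : L) : Set L :=
  {g | g ∈ G ∧ g ≤ X ∧ ∀ h ∈ G, h ≤ X → g ≤ h → g = h}

/-- `G` is a building set in the meet-semilattice `L` with minimal element `⊥`:
every element of `G` is nonminimal, and for every `X ≠ ⊥` there is a poset
isomorphism from the product of the lower intervals of the factors of `X`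
to the lower interval of `X`, sending the `g`-th "unit vector" to `g`. -/
def IsBuilding (L : Type*) [PartialOrder L] [OrderBot L] (G : Set L) : Prop :=
  (∀ g ∈ G, g ≠ ⊥) ∧
  ∀ X : L, X ≠ ⊥ →
    ∃ φ : ((g : factorsSet G X) → Set.Icc (⊥ : L) g.1) ≃o Set.Icc (⊥ : L) X,
      ∀ (g : factorsSet G X) (u : (h : factorsSet G X) → Set.Icc (⊥ : L) h.1),
        (u g : L) = g.1 → (∀ h, h ≠ g → (u h : L) = (⊥ : L)) → ((φ u : L) = g.1)

/-- A finite subset `S ⊆ G` is nested: every antichain in `S` of size at least 2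
has a least upper bound in `L` which does not belong to `G`. -/
def IsNested [PartialOrder L] (G : Set L) (S : Finset L) : Prop :=
  ↑S ⊆ G ∧ ∀ A : Finset L, A ⊆ S → IsAntichain (· ≤ ·) (A : Set L) → 2 ≤ A.card →
    ∃ j, IsLUB (A : Set L) j ∧ j ∉ G

/-- The nested set complex, as the collection of its faces. -/
def nestedComplex [PartialOrder L] (G : Set L) : Set (Finset L) := {S | IsNested G S}

/-- The order complex of a poset: the collection of finite chains. -/
def chainComplex (V : Type*) [Preorder V] : Set (Finset V) :=
  {S | IsChain (· ≤ ·) (S : Set V)}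

/-- The order complex of `L \ {⊥}`, with vertex set inside `L`. -/
def orderComplexBot (L : Type*) [PartialOrder L] [OrderBot L] : Set (Finset L) :=
  {S | (S : Set L) ⊆ {x | x ≠ ⊥} ∧ IsChain (· ≤ ·) (S : Set L)}

/-- Geometric realization of an abstract simplicial complex (given by its set of
faces, as finsets of the vertex type `V`): convex combinations of vertices
supported on a face. -/
abbrev geomReal {V : Type*} (K : Set (Finset V)) : Type _ :=
  {f : V → ℝ // (∀ v, 0 ≤ f v) ∧ ∃ s ∈ K, (∀ v, f v ≠ 0 → v ∈ s) ∧ ∑ v ∈ s, f v = 1}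

/-- The subposet of the face poset of the nested set complex consisting of the
nonempty nested sets whose join is `≤ X`. -/
def NestedFiber [PartialOrder L] (G : Set L) (X : L) :=
  {S : Finset L // IsNested G S ∧ S.Nonempty ∧ ∃ j, IsLUB (S : Set L) j ∧ j ≤ X}

instance [PartialOrder L] (G : Set L) (X : L) : PartialOrder (NestedFiber G X) := by
  unfold NestedFiber; infer_instance

/-- The face poset of the nested set complex: nonempty nested sets ordered by inclusion. -/
def NestedFaces [PartialOrder L] (G : Set L) :=
  {S : Finset L // IsNested G S ∧ S.Nonempty}

instance [PartialOrder L] (G : Set L) : PartialOrder (NestedFaces G) := by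
  unfold NestedFaces; infer_instance

/-- The combinatorial blowup of a poset `M` at `X`: elements `Y` (marked `false`)
with `Y ≱ X`, and elements `Ŷ` (marked `true`) with `Y ≱ X` such that `Y ∨ X`
exists; ordered by `Y ≺ Z` iff `Y < Z`, `Ŷ ≺ Ẑ` iff `Y < Z`, `Y ≺ Ẑ` iff `Y ≤ Z`. -/
def Bl {M : Type*} [PartialOrder M] (X : M) :=
  {p : M × Bool // ¬ X ≤ p.1 ∧ (p.2 = true → ∃ j, IsLUB {p.1, X} j)}

noncomputable instance {M : Type*} [PartialOrder M] (X : M) : PartialOrder (Bl X) := by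
  unfold Bl; infer_instance

/-- The atoms of `L`, used as coordinates for the realization of nested set fans. -/
def Atoms (L : Type*) [PartialOrder L] [OrderBot L] := {a : L // IsAtom a}

open Classical in
/-- The characteristic vector of the set of atoms below `X`. -/
noncomputable def charVec [PartialOrder L] [OrderBot L] (X : L) : Atoms L → ℝ :=
  fun a => if a.1 ≤ X then 1 else 0

/-- The polyhedral cone spanned by the characteristic vectors of elements of `S`. -/
noncomputable def coneOf [PartialOrder L] [OrderBot L] (S : Finset L) : Set (Atoms L → ℝ) :=
  {y | ∃ c : L → ℝ, (∀ x, 0 ≤ c x) ∧ y = ∑ x ∈ S, c x • charVec x}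

/-- The fan associated to a building set: the cones spanned by the nested sets. -/
def fanOf [PartialOrder L] [OrderBot L] (G : Set L) : Set (Set (Atoms L → ℝ)) :=
  {C | ∃ S : Finset L, IsNested G S ∧ C = coneOf S}

/-- The cone generated by a ray `v` together with a cone `c`. -/
def rayJoin {E : Type*} [AddCommMonoid E] [Module ℝ E] (v : E) (c : Set E) : Set E :=
  {y | ∃ a : ℝ, ∃ x ∈ c, 0 ≤ a ∧ y = a • v + x}

/-- The stellar subdivision of a fan `F` at the cone `σ` with new ray `v`:
cones not containing `σ` are kept, and each cone `τ ⊇ σ` is replaced by the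
joins of `v` with the faces of `τ` not containing `σ`. -/
def stellarSub {E : Type*} [AddCommMonoid E] [Module ℝ E]
    (F : Set (Set E)) (σ : Set E) (v : E) : Set (Set E) :=
  {τ | τ ∈ F ∧ ¬ σ ⊆ τ} ∪
  {D | ∃ τ ∈ F, σ ⊆ τ ∧ ∃ c ∈ F, c ⊆ τ ∧ ¬ σ ⊆ c ∧ D = rayJoin v c}

open Finset
section
variable {L : Type*} [SemilatticeInf L] [OrderBot L] [Fintype L] {G : Set L}
open Classical
set_option linter.unusedVariables false
set_option linter.unusedSectionVars false

-- unit tuple: top at coordinate h, bottom elsewhere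
noncomputable def eFun {X : L} (h : factorsSet G X) : (g : factorsSet G X) → Set.Icc (⊥ : L) g.1 :=
  fun k => if k = h then ⟨k.1, bot_le, le_rfl⟩ else ⟨⊥, le_rfl, bot_le⟩

noncomputable def topFun {X : L} : (g : factorsSet G X) → Set.Icc (⊥ : L) g.1 :=
  fun k => ⟨k.1, bot_le, le_rfl⟩

noncomputable def botFun {X : L} : (g : factorsSet G X) → Set.Icc (⊥ : L) g.1 :=
  fun k => ⟨⊥, le_rfl, bot_le⟩

section Phi
variable {X : L} (φ : ((g : factorsSet G X) → Set.Icc (⊥ : L) g.1) ≃o Set.Icc (⊥ : L) X)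

lemma phi_eFun (hU : ∀ (g : factorsSet G X) (u : (h : factorsSet G X) → Set.Icc (⊥ : L) h.1),
      (u g : L) = g.1 → (∀ h, h ≠ g → (u h : L) = (⊥ : L)) → ((φ u : L) = g.1))
    (h : factorsSet G X) : (φ (eFun h) : L) = h.1 := by
  refine hU h (eFun h) ?_ ?_
  · simp [eFun]
  · intro k hk; simp [eFun, hk]

lemma phi_botFun : (φ (botFun) : L) = (⊥ : L) := by
  have h1 : (botFun : (g : factorsSet G X) → Set.Icc (⊥ : L) g.1) ≤ φ.symm ⟨⊥, le_rfl, bot_le⟩ := by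
    intro k; exact Subtype.coe_le_coe.mp bot_le
  have := φ.monotone h1
  rw [φ.apply_symm_apply] at this
  exact le_antisymm this bot_le

lemma phi_topFun : (φ (topFun) : L) = X := by
  have h1 : φ.symm ⟨X, bot_le, le_rfl⟩ ≤ (topFun : (g : factorsSet G X) → Set.Icc (⊥ : L) g.1) := by
    intro k; exact (φ.symm ⟨X, bot_le, le_rfl⟩ k).2.2
  have := φ.monotone h1
  rw [φ.apply_symm_apply] at this
  exact le_antisymm ((φ topFun).2.2) this

lemma le_eFun_iff {u : (g : factorsSet G X) → Set.Icc (⊥ : L) g.1} {h : factorsSet G X} :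
    u ≤ eFun h ↔ ∀ k, k ≠ h → (u k : L) = ⊥ := by
  constructor
  · intro hu k hk
    have := hu k
    simp only [eFun, if_neg hk] at this
    exact le_antisymm this bot_le
  · intro hu k
    by_cases hk : k = h
    · subst hk; simp only [eFun, if_pos rfl]; exact (u k).2.2
    · simp only [eFun, if_neg hk]
      exact Subtype.coe_le_coe.mp (le_of_eq (hu k hk))

end Phi
end

section
variable {L : Type*} [SemilatticeInf L] [OrderBot L] [Fintype L] {G : Set L}
open Classical Finset
set_option linter.unusedVariables false
set_option linter.unusedSectionVars false

lemma exists_maximal_compat {α : Type*} [Preorder α] (s : Finset α) (h : s.Nonempty) :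
    ∃ m ∈ s, ∀ x ∈ s, ¬ m < x := by
  obtain ⟨m, hm⟩ := s.exists_maximal h
  exact ⟨m, hm.1, fun x hx hlt => hlt.not_ge (hm.2 hx hlt.le)⟩

lemma exists_minimal_compat {α : Type*} [Preorder α] (s : Finset α) (h : s.Nonempty) :
    ∃ m ∈ s, ∀ x ∈ s, ¬ x < m := by
  obtain ⟨m, hm⟩ := s.exists_minimal h
  exact ⟨m, hm.1, fun x hx hlt => hlt.not_ge (hm.2 hx hlt.le)⟩

lemma factorsSet_subset : factorsSet G X ⊆ G := fun g hg => hg.1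

lemma exists_factor_above {g X : L} (hg : g ∈ G) (hgX : g ≤ X) :
    ∃ h ∈ factorsSet G X, g ≤ h := by
  have hne : (univ.filter (fun h => h ∈ G ∧ g ≤ h ∧ h ≤ X) : Finset L).Nonempty :=
    ⟨g, by simp [hg, hgX]⟩
  obtain ⟨m, hm, hmax⟩ := exists_maximal_compat _ hne
  simp only [mem_filter, mem_univ, true_and] at hm
  refine ⟨m, ⟨hm.1, hm.2.2, ?_⟩, hm.2.1⟩
  intro h hh hhX hmh
  by_contra hne2
  exact hmax h (by simp [hh, hm.2.1.trans hmh, hhX]) (lt_of_le_of_ne hmh hne2)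

lemma factors_self {g : L} (hg : g ∈ G) : factorsSet G g = {g} := by
  ext h
  constructor
  · rintro ⟨h1, h2, h3⟩; exact h3 g hg le_rfl h2
  · rintro rfl; exact ⟨hg, le_rfl, fun h hh hle hge => le_antisymm hge hle⟩

lemma factor_of_le {g m Z : L} (hmZ : m ≤ Z) (hg : g ∈ factorsSet G Z) (hgm : g ≤ m) :
    g ∈ factorsSet G m :=
  ⟨hg.1, hgm, fun h hh hhm hgh => hg.2.2 h hh (hhm.trans hmZ) hgh⟩

lemma factors_nonempty (hG : IsBuilding L G) {X : L} (hX : X ≠ ⊥) :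
    (factorsSet G X).Nonempty := by
  by_contra hne
  rw [Set.not_nonempty_iff_eq_empty] at hne
  obtain ⟨φ, hU⟩ := hG.2 X hX
  have : IsEmpty (factorsSet G X) := by rw [hne]; exact Set.isEmpty_coe_sort.mpr rfl
  have heq : (botFun : (g : factorsSet G X) → Set.Icc (⊥ : L) g.1) = topFun :=
    Subsingleton.elim _ _
  have h1 := phi_botFun φ
  have h2 := phi_topFun φ
  rw [heq, h2] at h1
  exact hX h1

lemma unique_factor (hG : IsBuilding L G) {X g h₁ h₂ : L} (hX : X ≠ ⊥)
    (hg : g ∈ G) (hgX : g ≤ X) (h1m : h₁ ∈ factorsSet G X) (h2m : h₂ ∈ factorsSet G X)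
    (hg1 : g ≤ h₁) (hg2 : g ≤ h₂) : h₁ = h₂ := by
  by_contra hne
  obtain ⟨φ, hU⟩ := hG.2 X hX
  set u := φ.symm ⟨g, bot_le, hgX⟩ with hu
  have key : ∀ (h : factorsSet G X), g ≤ h.1 → u ≤ eFun h := by
    intro h hgh
    rw [← φ.le_iff_le, φ.apply_symm_apply]
    exact Subtype.coe_le_coe.mp (by rw [phi_eFun φ hU h]; exact hgh)
  have k1 := le_eFun_iff.mp (key ⟨h₁, h1m⟩ hg1)
  have k2 := le_eFun_iff.mp (key ⟨h₂, h2m⟩ hg2)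
  have hub : u ≤ botFun := by
    intro k
    rcases eq_or_ne k ⟨h₁, h1m⟩ with hk | hk
    · have : k ≠ ⟨h₂, h2m⟩ := by rw [hk]; intro hc; exact hne (congrArg Subtype.val hc)
      exact Subtype.coe_le_coe.mp (le_of_eq (k2 k this))
    · exact Subtype.coe_le_coe.mp (le_of_eq (k1 k hk))
  have := φ.monotone hub
  rw [φ.apply_symm_apply] at this
  have : g ≤ (φ botFun : L) := this
  rw [phi_botFun φ] at this
  exact hG.1 g hg (le_bot_iff.mp this)

lemma isLUB_factors (hG : IsBuilding L G) {X : L} (hX : X ≠ ⊥) :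
    IsLUB (factorsSet G X) X := by
  obtain ⟨φ, hU⟩ := hG.2 X hX
  constructor
  · intro h hm; exact hm.2.1
  · intro Y hY
    set u := φ.symm ⟨X ⊓ Y, bot_le, inf_le_left⟩ with hu
    have key : (topFun : (g : factorsSet G X) → Set.Icc (⊥ : L) g.1) ≤ u := by
      intro k
      have hk : (eFun k : (g : factorsSet G X) → Set.Icc (⊥ : L) g.1) ≤ u := by
        rw [← φ.le_iff_le, φ.apply_symm_apply]
        refine Subtype.coe_le_coe.mp ?_
        rw [phi_eFun φ hU k]
        exact le_inf k.2.2.1 (hY k.2)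
      have := hk k
      simpa [eFun, topFun] using this
    have := φ.monotone key
    rw [φ.apply_symm_apply] at this
    have h2 : X ≤ X ⊓ Y := by
      calc X = (φ topFun : L) := (phi_topFun φ).symm
      _ ≤ X ⊓ Y := this
    exact h2.trans inf_le_right
end

section
variable {L : Type*} [SemilatticeInf L] [OrderBot L] [Fintype L] {G : Set L}
open Classical Finset
set_option linter.unusedVariables false
set_option linter.unusedSectionVars false
set_option maxHeartbeats 800000

lemma symm_topFun {X : L} (φ : ((g : factorsSet G X) → Set.Icc (⊥ : L) g.1) ≃o Set.Icc (⊥ : L) X) :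
    φ.symm ⟨X, bot_le, le_rfl⟩ = topFun := by
  rw [OrderIso.symm_apply_eq]
  exact (Subtype.ext (phi_topFun φ)).symm

lemma symm_le_eFun {X : L} (φ : ((g : factorsSet G X) → Set.Icc (⊥ : L) g.1) ≃o Set.Icc (⊥ : L) X)
    (hU : ∀ (g : factorsSet G X) (u : (h : factorsSet G X) → Set.Icc (⊥ : L) h.1),
      (u g : L) = g.1 → (∀ h, h ≠ g → (u h : L) = (⊥ : L)) → ((φ u : L) = g.1))
    {z : L} (hz : z ≤ X) (h : factorsSet G X) (hzh : z ≤ h.1) :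
    φ.symm ⟨z, bot_le, hz⟩ ≤ eFun h := by
  rw [← φ.le_iff_le, φ.apply_symm_apply]
  refine Subtype.coe_le_coe.mp ?_
  rw [phi_eFun φ hU h]
  exact hzh

/-- For `h` a factor of `X` and `X` the LUB of `A ⊆ G`, `h` is the LUB of the part of `A` below `h`. -/
lemma factor_isLUB_filter (hG : IsBuilding L G) {X : L} (hX : X ≠ ⊥) {A : Finset L}
    (hAG : ∀ a ∈ A, a ∈ G) (hXlub : IsLUB (A : Set L) X) {h : L} (hh : h ∈ factorsSet G X) :
    IsLUB {x : L | x ∈ A ∧ x ≤ h} h := by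
  obtain ⟨φ, hU⟩ := hG.2 X hX
  constructor
  · intro x hx; exact hx.2
  · intro Z hZ
    set hsub : factorsSet G X := ⟨h, hh⟩ with hhsub
    have hZhX : Z ⊓ h ≤ X := le_trans inf_le_right hh.2.1
    set u : (g : factorsSet G X) → Set.Icc (⊥ : L) g.1 :=
      fun k => if k = hsub then φ.symm ⟨Z ⊓ h, bot_le, hZhX⟩ k
        else topFun k with hu
    have hub : ∀ a (ha : a ∈ A), φ.symm ⟨a, bot_le, hXlub.1 (Finset.mem_coe.mpr ha)⟩ ≤ u := by
      intro a ha
      have haX : a ≤ X := hXlub.1 (Finset.mem_coe.mpr ha)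
      by_cases hah : a ≤ h
      · intro k
        by_cases hk : k = hsub
        · have hm : (⟨a, bot_le, haX⟩ : Set.Icc (⊥:L) X) ≤ ⟨Z ⊓ h, bot_le, hZhX⟩ :=
            Subtype.coe_le_coe.mp (le_inf (hZ ⟨ha, hah⟩) hah)
          have h2 := φ.symm.monotone hm
          simp only [hu, hk, if_pos rfl]
          exact h2 k
        · simp only [hu, if_neg hk]
          exact Subtype.coe_le_coe.mp (φ.symm _ k).2.2
      · obtain ⟨ha', hfa, hafa⟩ := exists_factor_above (hAG a ha) haX
        have hne : (⟨ha', hfa⟩ : factorsSet G X) ≠ hsub := by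
          intro hc
          exact hah (hafa.trans (le_of_eq (congrArg Subtype.val hc)))
        have hle := symm_le_eFun φ hU haX ⟨ha', hfa⟩ hafa
        intro k
        by_cases hk : k = hsub
        · have hkne : k ≠ ⟨ha', hfa⟩ := by rw [hk]; exact fun hc => hne hc.symm
          have := le_eFun_iff.mp hle k hkne
          simp only [hu, hk, if_pos rfl]
          exact Subtype.coe_le_coe.mp (by rw [this]; exact bot_le)
        · simp only [hu, if_neg hk]
          exact Subtype.coe_le_coe.mp (φ.symm _ k).2.2
    have hXle : X ≤ (φ u : L) := by
      refine hXlub.2 ?_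
      intro a ha
      have := φ.monotone (hub a ha)
      rw [φ.apply_symm_apply] at this
      exact this
    have htop : (topFun : (g : factorsSet G X) → Set.Icc (⊥ : L) g.1) ≤ u := by
      rw [← symm_topFun φ, ← φ.le_iff_le, φ.apply_symm_apply]
      exact Subtype.coe_le_coe.mp hXle
    have hcoord := htop hsub
    have hzh := symm_le_eFun φ hU hZhX hsub inf_le_right
    have hEq : φ.symm ⟨Z ⊓ h, bot_le, hZhX⟩ = eFun hsub := by
      funext k
      by_cases hk : k = hsub
      · rw [hk]
        refine le_antisymm (hzh hsub) ?_
        simp only [hu, if_pos rfl] at hcoord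
        simpa [eFun, topFun] using hcoord
      · refine Subtype.ext ?_
        rw [le_eFun_iff.mp hzh k hk]
        simp [eFun, hk]
    have hvals : Z ⊓ h = h := by
      have h2 : (⟨Z ⊓ h, bot_le, hZhX⟩ : Set.Icc (⊥:L) X) = φ (eFun hsub) := by
        rw [← hEq, φ.apply_symm_apply]
      have h3 := congrArg Subtype.val h2
      rw [phi_eFun φ hU hsub] at h3
      exact h3
    exact inf_eq_right.mp hvals
end

section
variable {L : Type*} [SemilatticeInf L] [OrderBot L] [Fintype L] {G : Set L}
open Classical Finset
set_option linter.unusedVariables false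
set_option linter.unusedSectionVars false
set_option maxHeartbeats 800000

lemma isLUB_empty_bot' {X : L} (h : IsLUB (∅ : Set L) X) : X = ⊥ :=
  le_bot_iff.mp (h.2 (by simp [upperBounds]))

/-- Key lemma: the factor set of the LUB of a nested antichain is the antichain itself. -/
lemma nested_antichain_factors (hG : IsBuilding L G) {S A : Finset L} (hS : IsNested G S)
    (hAS : A ⊆ S) (hA : IsAntichain (· ≤ ·) (A : Set L)) (hne : A.Nonempty) :
    ∃ X, IsLUB (A : Set L) X ∧ factorsSet G X = ↑A ∧ X ≠ ⊥ ∧ (2 ≤ A.card → X ∉ G) := by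
  have hAG : ∀ a ∈ A, a ∈ G := fun a ha => hS.1 (hAS ha)
  by_cases hc : 2 ≤ A.card
  · obtain ⟨X, hlub, hXG⟩ := hS.2 A hAS hA hc
    obtain ⟨a₀, ha₀⟩ := hne
    have hXbot : X ≠ ⊥ := by
      intro hb
      exact hG.1 a₀ (hAG a₀ ha₀) (le_bot_iff.mp (hb ▸ hlub.1 (Finset.mem_coe.mpr ha₀)))
    have trich : ∀ h, h ∈ factorsSet G X → ∃ a ∈ A, h = a ∧ A.filter (· ≤ h) = {a} := by
      intro h hh
      have hlubh := factor_isLUB_filter hG hXbot hAG hlub hh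
      have hset : {x : L | x ∈ A ∧ x ≤ h} = ↑(A.filter (· ≤ h)) := by ext x; simp
      rw [hset] at hlubh
      rcases Nat.lt_or_ge (A.filter (· ≤ h)).card 2 with hlt | hge
      · interval_cases hcard : (A.filter (· ≤ h)).card
        · rw [Finset.card_eq_zero] at hcard
          rw [hcard] at hlubh
          simp only [coe_empty] at hlubh
          exact absurd (isLUB_empty_bot' hlubh) (fun hb => hG.1 h hh.1 hb)
        · obtain ⟨a, ha⟩ := Finset.card_eq_one.mp hcard
          rw [ha] at hlubh
          simp only [coe_singleton] at hlubh
          have : h = a := hlubh.unique isLUB_singleton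
          refine ⟨a, ?_, this, ha⟩
          have : a ∈ A.filter (· ≤ h) := by rw [ha]; exact mem_singleton_self a
          exact Finset.mem_of_mem_filter a this
      · obtain ⟨j, hj, hjG⟩ := hS.2 _ ((filter_subset _ _).trans hAS)
          (hA.subset (by exact_mod_cast filter_subset _ _)) hge
        exact absurd (hlubh.unique hj ▸ hh.1) hjG
    have hfact : factorsSet G X = ↑A := by
      apply Set.eq_of_subset_of_subset
      · intro h hh
        obtain ⟨a, ha, rfl, -⟩ := trich h hh
        exact Finset.mem_coe.mpr ha
      · intro a ha
        have ha' : a ∈ A := Finset.mem_coe.mp ha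
        obtain ⟨h, hh, hah⟩ := exists_factor_above (hAG a ha') (hlub.1 ha)
        obtain ⟨a', ha'', heq, hfil⟩ := trich h hh
        have : a ∈ A.filter (· ≤ h) := Finset.mem_filter.mpr ⟨ha', hah⟩
        rw [hfil, Finset.mem_singleton] at this
        rw [this, ← heq]
        exact hh
    exact ⟨X, hlub, hfact, hXbot, fun _ => hXG⟩
  · obtain ⟨a, ha⟩ := Finset.card_eq_one.mp
      (le_antisymm (by omega) (Finset.card_pos.mpr hne))
    subst ha
    refine ⟨a, by simpa using isLUB_singleton, ?_, hG.1 a (hAG a (mem_singleton_self a)), by intro h2; simp at h2⟩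
    rw [factors_self (hAG a (mem_singleton_self a))]
    simp

noncomputable def maxels (U : Finset L) : Finset L :=
  U.filter (fun g => ∀ h ∈ U, g ≤ h → g = h)

lemma maxels_subset {U : Finset L} : maxels U ⊆ U := filter_subset _ _

lemma exists_le_maxels {U : Finset L} {x : L} (hx : x ∈ U) : ∃ m ∈ maxels U, x ≤ m := by
  obtain ⟨m, hm, hmax⟩ := exists_maximal_compat (U.filter (x ≤ ·)) ⟨x, by simp [hx]⟩
  simp only [mem_filter] at hm
  refine ⟨m, Finset.mem_filter.mpr ⟨hm.1, ?_⟩, hm.2⟩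
  intro h hh hmh
  by_contra hne
  exact hmax h (by simp [hh, hm.2.trans hmh]) (lt_of_le_of_ne hmh hne)

lemma maxels_antichain (U : Finset L) : IsAntichain (· ≤ ·) (maxels U : Set L) := by
  intro g hg h hh hne hle
  exact hne ((Finset.mem_filter.mp hg).2 h (maxels_subset hh) hle)

/-- LUB and factor set for a "down-closed" subset of a nested set. -/
lemma downset_lub (hG : IsBuilding L G) {S U : Finset L} (hS : IsNested G S) (hUS : U ⊆ S)
    (hne : U.Nonempty) :
    ∃ X, IsLUB (U : Set L) X ∧ factorsSet G X = ↑(maxels U) ∧ X ≠ ⊥ := by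
  obtain ⟨x₀, hx₀⟩ := hne
  obtain ⟨m₀, hm₀, -⟩ := exists_le_maxels hx₀
  obtain ⟨X, hlub, hfact, hXbot, -⟩ := nested_antichain_factors hG hS
    (maxels_subset.trans hUS) (maxels_antichain U) ⟨m₀, hm₀⟩
  refine ⟨X, ⟨?_, ?_⟩, hfact, hXbot⟩
  · intro x hx
    obtain ⟨m, hm, hxm⟩ := exists_le_maxels (Finset.mem_coe.mp hx)
    exact hxm.trans (hlub.1 (Finset.mem_coe.mpr hm))
  · intro Z hZ
    exact hlub.2 (fun m hm => hZ (Finset.mem_coe.mpr (maxels_subset (Finset.mem_coe.mp hm))))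

lemma downset_eq_of_maxels_eq {S U U' : Finset L}
    (hU : ∀ g ∈ S, ∀ h ∈ U, g ≤ h → g ∈ U) (hU' : ∀ g ∈ S, ∀ h ∈ U', g ≤ h → g ∈ U')
    (hUS : U ⊆ S) (hU'S : U' ⊆ S) (h : maxels U = maxels U') : U = U' := by
  apply Finset.Subset.antisymm
  · intro x hx
    obtain ⟨m, hm, hxm⟩ := exists_le_maxels hx
    rw [h] at hm
    exact hU' x (hUS hx) m (maxels_subset hm) hxm
  · intro x hx
    obtain ⟨m, hm, hxm⟩ := exists_le_maxels hx
    rw [← h] at hm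
    exact hU x (hU'S hx) m (maxels_subset hm) hxm
end

section
variable {L : Type*} [SemilatticeInf L] [OrderBot L] [Fintype L] {G : Set L}
open Classical Finset
set_option linter.unusedVariables false
set_option linter.unusedSectionVars false
set_option maxHeartbeats 1600000

noncomputable def Ffin (G : Set L) (X : L) : Finset L := univ.filter (· ∈ factorsSet G X)

lemma mem_Ffin {G : Set L} {g X : L} : g ∈ Ffin G X ↔ g ∈ factorsSet G X := by simp [Ffin]

noncomputable def UF (G : Set L) (C : Finset L) : Finset L := C.biUnion (fun X => Ffin G X)

lemma mem_UF {G : Set L} {g : L} {C : Finset L} :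
    g ∈ UF G C ↔ ∃ X ∈ C, g ∈ factorsSet G X := by simp [UF, mem_Ffin]

lemma symm_botFun {X : L} (φ : ((g : factorsSet G X) → Set.Icc (⊥ : L) g.1) ≃o Set.Icc (⊥ : L) X) :
    φ.symm ⟨⊥, le_rfl, bot_le⟩ = botFun := by
  rw [OrderIso.symm_apply_eq]
  exact (Subtype.ext (phi_botFun φ)).symm

lemma chain_UF_nested_aux (hG : IsBuilding L G) :
    ∀ n (C : Finset L), C.card ≤ n → IsChain (· ≤ ·) (C : Set L) → (∀ X ∈ C, X ≠ ⊥) →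
    ∀ A : Finset L, A ⊆ UF G C → IsAntichain (· ≤ ·) (A : Set L) → 2 ≤ A.card →
      ∃ j, IsLUB (A : Set L) j ∧ j ∉ G := by
  intro n
  induction n with
  | zero =>
    intro C hcard _ _ A hAsub _ hA2
    rw [Nat.le_zero, Finset.card_eq_zero] at hcard
    subst hcard
    simp only [UF, Finset.biUnion_empty, Finset.subset_empty] at hAsub
    subst hAsub; simp at hA2
  | succ n IH =>
    intro C hcard hchain hbot A hAsub hA hA2
    rcases Finset.eq_empty_or_nonempty C with rfl | hCne
    · simp only [UF, Finset.biUnion_empty, Finset.subset_empty] at hAsub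
      subst hAsub; simp at hA2
    obtain ⟨Y, hYC, hYmax⟩ := exists_maximal_compat C hCne
    have hYtop : ∀ Z ∈ C, Z ≤ Y := by
      intro Z hZ
      rcases eq_or_ne Z Y with rfl | hne
      · exact le_rfl
      rcases hchain (Finset.mem_coe.mpr hZ) (Finset.mem_coe.mpr hYC) hne with h | h
      · exact h
      · exact absurd (lt_of_le_of_ne h (fun hc => hne hc.symm)) (hYmax Z hZ)
    have hYbot : Y ≠ ⊥ := hbot Y hYC
    set C' := C.erase Y with hC'
    have hC'card : C'.card ≤ n := by
      have h1 : C'.card < C.card := Finset.card_erase_lt_of_mem hYC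
      omega
    have hC'chain : IsChain (· ≤ ·) (C' : Set L) := hchain.mono (Finset.coe_subset.mpr (Finset.erase_subset _ _))
    have hC'bot : ∀ X ∈ C', X ≠ ⊥ := fun X hX => hbot X (Finset.mem_of_mem_erase hX)
    -- every element of A lies below Y and is in G
    have hAG : ∀ a ∈ A, a ∈ G := by
      intro a ha
      obtain ⟨X, hX, hf⟩ := mem_UF.mp (hAsub ha)
      exact hf.1
    have hAY : ∀ a ∈ A, a ≤ Y := by
      intro a ha
      obtain ⟨X, hX, hf⟩ := mem_UF.mp (hAsub ha)
      exact hf.2.1.trans (hYtop X hX)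
    obtain ⟨φ, hU⟩ := hG.2 Y hYbot
    by_cases hcase : ∃ h ∈ factorsSet G Y, ∀ a ∈ A, a ≤ h
    · -- all elements lie under one factor of Y: they are factors of smaller chain elements
      obtain ⟨h, hh, hall⟩ := hcase
      have hsub' : A ⊆ UF G C' := by
        intro a ha
        obtain ⟨X, hX, hf⟩ := mem_UF.mp (hAsub ha)
        rcases eq_or_ne X Y with rfl | hXY
        · -- a is a factor of Y and a ≤ h, so a = h
          have hah : a = h := hf.2.2 h hh.1 hh.2.1 (hall a ha)
          obtain ⟨a', ha', hne'⟩ := Finset.exists_mem_ne (s := A) (by omega) a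
          exact absurd (hah ▸ hall a' ha') (hA (Finset.mem_coe.mpr ha') (Finset.mem_coe.mpr ha) hne')
        · exact mem_UF.mpr ⟨X, Finset.mem_erase.mpr ⟨hXY, hX⟩, hf⟩
      exact IH C' hC'card hC'chain hC'bot A hsub' hA hA2
    · -- the "nonconstant" case: build the LUB inside the product decomposition at Y
      have claim_j : ∀ (k : factorsSet G Y), (A.filter (· ≤ k.1)).Nonempty →
          ∃ j, IsLUB ((A.filter (· ≤ k.1) : Finset L) : Set L) j ∧ j ≤ k.1 := by
        intro k ⟨a₀, ha₀⟩
        have ha₀A := Finset.mem_of_mem_filter a₀ ha₀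
        have ha₀k := (Finset.mem_filter.mp ha₀).2
        rcases Nat.lt_or_ge (A.filter (· ≤ k.1)).card 2 with hlt | hge
        · have hcard1 : (A.filter (· ≤ k.1)).card = 1 :=
            le_antisymm (by omega) (Finset.card_pos.mpr ⟨a₀, ha₀⟩)
          obtain ⟨a, ha⟩ := Finset.card_eq_one.mp hcard1
          refine ⟨a, by rw [ha]; simpa using isLUB_singleton, ?_⟩
          have : a ∈ A.filter (· ≤ k.1) := by rw [ha]; exact mem_singleton_self a
          exact (Finset.mem_filter.mp this).2
        · -- at least two elements below k: they lie in UF C'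
          have hsub' : A.filter (· ≤ k.1) ⊆ UF G C' := by
            intro a ha
            have haA := Finset.mem_of_mem_filter a ha
            have hak := (Finset.mem_filter.mp ha).2
            obtain ⟨X, hX, hf⟩ := mem_UF.mp (hAsub haA)
            rcases eq_or_ne X Y with rfl | hXY
            · have hak2 : a = k.1 := hf.2.2 k.1 k.2.1 k.2.2.1 hak
              obtain ⟨a', ha', hne'⟩ := Finset.exists_mem_ne (s := A.filter (· ≤ k.1)) (by omega) a
              have ha'k := (Finset.mem_filter.mp ha').2
              exact absurd (hak2 ▸ ha'k)
                (hA (Finset.mem_coe.mpr (Finset.mem_of_mem_filter a' ha'))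
                  (Finset.mem_coe.mpr haA) hne')
            · exact mem_UF.mpr ⟨X, Finset.mem_erase.mpr ⟨hXY, hX⟩, hf⟩
          obtain ⟨j, hj, -⟩ := IH C' hC'card hC'chain hC'bot _ hsub'
            (hA.subset (by exact_mod_cast filter_subset _ _)) hge
          exact ⟨j, hj, hj.2 (fun x hx => (Finset.mem_filter.mp (Finset.mem_coe.mp hx)).2)⟩
      set P : factorsSet G Y → Prop :=
        fun k => ∃ j, IsLUB ((A.filter (· ≤ k.1) : Finset L) : Set L) j ∧ j ≤ k.1 with hP
      set t : (g : factorsSet G Y) → Set.Icc (⊥ : L) g.1 := fun k =>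
        if hk : P k then φ.symm ⟨hk.choose, bot_le, hk.choose_spec.2.trans k.2.2.1⟩ k
        else ⟨⊥, le_rfl, bot_le⟩ with ht
      refine ⟨(φ t : L), ⟨?_, ?_⟩, ?_⟩
      · -- upper bound
        intro a ha
        have haA := Finset.mem_coe.mp ha
        obtain ⟨h, hh, hah⟩ := exists_factor_above (hAG a haA) (hAY a haA)
        have hfil : a ∈ A.filter (· ≤ (⟨h, hh⟩ : factorsSet G Y).1) :=
          Finset.mem_filter.mpr ⟨haA, hah⟩
        have hPk : P ⟨h, hh⟩ := claim_j ⟨h, hh⟩ ⟨a, hfil⟩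
        have key : φ.symm ⟨a, bot_le, hAY a haA⟩ ≤ t := by
          intro k
          by_cases hk : k = ⟨h, hh⟩
          · rw [hk]
            simp only [ht, dif_pos hPk]
            have haj : a ≤ hPk.choose := hPk.choose_spec.1.1 (Finset.mem_coe.mpr hfil)
            exact φ.symm.monotone (Subtype.coe_le_coe.mp haj) _
          · have := le_eFun_iff.mp (symm_le_eFun φ hU (hAY a haA) ⟨h, hh⟩ hah) k hk
            refine Subtype.coe_le_coe.mp ?_
            rw [this]
            exact bot_le
        calc a = (φ (φ.symm ⟨a, bot_le, hAY a haA⟩) : L) := by rw [φ.apply_symm_apply]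
        _ ≤ (φ t : L) := Subtype.coe_le_coe.mpr (φ.monotone key)
      · -- least
        intro Z hZ
        have key : t ≤ φ.symm ⟨Z ⊓ Y, bot_le, inf_le_right⟩ := by
          intro k
          by_cases hk : P k
          · simp only [ht, dif_pos hk]
            have hjZ : hk.choose ≤ Z := hk.choose_spec.1.2
              (fun x hx => hZ (Finset.mem_coe.mpr (Finset.mem_of_mem_filter x (Finset.mem_coe.mp hx))))
            have hjY : hk.choose ≤ Y := hk.choose_spec.2.trans k.2.2.1
            exact φ.symm.monotone (Subtype.coe_le_coe.mp (le_inf hjZ hjY)) _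
          · simp only [ht, dif_neg hk]
            exact Subtype.coe_le_coe.mp bot_le
        have := φ.monotone key
        rw [φ.apply_symm_apply] at this
        exact (Subtype.coe_le_coe.mpr this).trans inf_le_left
      · -- the LUB is not in G
        intro hjG
        apply hcase
        have hjY : (φ t : L) ≤ Y := (φ t).2.2
        obtain ⟨h, hh, hjh⟩ := exists_factor_above hjG hjY
        refine ⟨h, hh, fun a ha => le_trans ?_ hjh⟩
        -- a ≤ φ t : it is the upper-bound property proven above; redo quickly
        obtain ⟨h', hh', hah'⟩ := exists_factor_above (hAG a ha) (hAY a ha)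
        have hfil : a ∈ A.filter (· ≤ (⟨h', hh'⟩ : factorsSet G Y).1) :=
          Finset.mem_filter.mpr ⟨ha, hah'⟩
        have hPk : P ⟨h', hh'⟩ := claim_j ⟨h', hh'⟩ ⟨a, hfil⟩
        have key : φ.symm ⟨a, bot_le, hAY a ha⟩ ≤ t := by
          intro k
          by_cases hk : k = ⟨h', hh'⟩
          · rw [hk]
            simp only [ht, dif_pos hPk]
            have haj : a ≤ hPk.choose := hPk.choose_spec.1.1 (Finset.mem_coe.mpr hfil)
            exact φ.symm.monotone (Subtype.coe_le_coe.mp haj) _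
          · have := le_eFun_iff.mp (symm_le_eFun φ hU (hAY a ha) ⟨h', hh'⟩ hah') k hk
            refine Subtype.coe_le_coe.mp ?_
            rw [this]
            exact bot_le
        calc a = (φ (φ.symm ⟨a, bot_le, hAY a ha⟩) : L) := by rw [φ.apply_symm_apply]
        _ ≤ (φ t : L) := Subtype.coe_le_coe.mpr (φ.monotone key)

lemma chain_UF_nested (hG : IsBuilding L G) {C : Finset L}
    (hchain : IsChain (· ≤ ·) (C : Set L)) (hbot : ∀ X ∈ C, X ≠ ⊥) :
    IsNested G (UF G C) := by
  refine ⟨?_, ?_⟩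
  · intro g hg
    obtain ⟨X, hX, hf⟩ := mem_UF.mp (Finset.mem_coe.mp hg)
    exact hf.1
  · exact chain_UF_nested_aux hG C.card C le_rfl hchain hbot
end

section
variable {L : Type*} [SemilatticeInf L] [OrderBot L] [Fintype L] {G : Set L}
open Classical Finset
set_option linter.unusedVariables false
set_option linter.unusedSectionVars false
set_option maxHeartbeats 800000

lemma factor_filter_card_one (hG : IsBuilding L G) {X g : L} (hX : X ≠ ⊥) (hg : g ∈ G)
    (hgX : g ≤ X) : ((Ffin G X).filter (fun h => g ≤ h)).card = 1 := by
  obtain ⟨h, hh, hgh⟩ := exists_factor_above hg hgX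
  rw [Finset.card_eq_one]
  refine ⟨h, Finset.eq_singleton_iff_unique_mem.mpr ⟨Finset.mem_filter.mpr ⟨mem_Ffin.mpr hh, hgh⟩, ?_⟩⟩
  intro x hx
  obtain ⟨hx1, hx2⟩ := Finset.mem_filter.mp hx
  exact unique_factor hG hX hg hgX (mem_Ffin.mp hx1) hh hx2 hgh

lemma factor_filter_card_zero {X g : L} (hgX : ¬ g ≤ X) :
    ((Ffin G X).filter (fun h => g ≤ h)).card = 0 := by
  rw [Finset.card_eq_zero, Finset.filter_eq_empty_iff]
  intro h hh hgh
  exact hgX (hgh.trans (mem_Ffin.mp hh).2.1)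

lemma nested_forest (hG : IsBuilding L G) {S : Finset L} (hS : IsNested G S) {g h h' : L}
    (hgG : g ∈ G) (hhS : h ∈ S) (hh'S : h' ∈ S) (hgh : g ≤ h) (hgh' : g ≤ h') :
    h ≤ h' ∨ h' ≤ h := by
  by_contra hcon
  push_neg at hcon
  have hne : h ≠ h' := fun hc => hcon.1 (le_of_eq hc)
  have hanti : IsAntichain (· ≤ ·) (({h, h'} : Finset L) : Set L) := by
    intro x hx y hy hxy
    simp only [Finset.coe_insert, Finset.coe_singleton, Set.mem_insert_iff,
      Set.mem_singleton_iff] at hx hy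
    rcases hx with rfl | rfl <;> rcases hy with rfl | rfl
    · exact absurd rfl hxy
    · exact fun hc => hcon.1 hc
    · exact fun hc => hcon.2 hc
    · exact absurd rfl hxy
  have hsub : ({h, h'} : Finset L) ⊆ S := by
    intro x hx
    rcases Finset.mem_insert.mp hx with rfl | hx
    · exact hhS
    · exact (Finset.mem_singleton.mp hx) ▸ hh'S
  obtain ⟨X, hlub, hfact, hXbot, -⟩ := nested_antichain_factors hG hS hsub hanti ⟨h, by simp⟩
  have hhf : h ∈ factorsSet G X := by rw [hfact]; simp
  have hh'f : h' ∈ factorsSet G X := by rw [hfact]; simp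
  have hgX : g ≤ X := hgh.trans (hlub.1 (by simp))
  exact hne (unique_factor hG hXbot hgG hgX hhf hh'f hgh hgh')
end

section
variable {L : Type*} [SemilatticeInf L] [OrderBot L] [Fintype L] {G : Set L}
open Classical Finset
set_option linter.unusedVariables false
set_option linter.unusedSectionVars false
set_option maxHeartbeats 800000

noncomputable def phiMap (G : Set L) (f : L → ℝ) : L → ℝ :=
  fun g => ∑ X ∈ univ.filter (fun X => g ∈ factorsSet G X), f X / (Ffin G X).card

noncomputable def tFun (w : L → ℝ) (g : L) : ℝ := ∑ h ∈ univ.filter (fun h => g ≤ h), w h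

lemma telescope_aux : ∀ (n : ℕ) (V : Finset ℝ) (a b : ℝ),
    (V.filter (fun v => a < v ∧ v ≤ b)).card ≤ n → b ∈ V → a < b →
    (a ∈ V ∨ (a = 0 ∧ ∀ v ∈ V, 0 < v)) →
    ∑ v ∈ V.filter (fun v => a < v ∧ v ≤ b), (v - ((V.filter (· < v)).max.unbotD 0)) = b - a := by
  intro n
  induction n with
  | zero =>
    intro V a b hcard hb hab ha
    exfalso
    have hbB : b ∈ V.filter (fun v => a < v ∧ v ≤ b) := mem_filter.mpr ⟨hb, hab, le_rfl⟩
    rw [Nat.le_zero, card_eq_zero] at hcard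
    rw [hcard] at hbB
    simp at hbB
  | succ n IH =>
    intro V a b hcard hb hab ha
    set B := V.filter (fun v => a < v ∧ v ≤ b) with hB
    have hbB : b ∈ B := mem_filter.mpr ⟨hb, hab, le_rfl⟩
    have hBne : B.Nonempty := ⟨b, hbB⟩
    set m := B.min' hBne with hm
    have hmB : m ∈ B := B.min'_mem hBne
    have hmV : m ∈ V := mem_of_mem_filter m hmB
    have ham : a < m := (mem_filter.mp hmB).2.1
    have hmb : m ≤ b := (mem_filter.mp hmB).2.2
    have hminle : ∀ x ∈ B, m ≤ x := fun x hx => B.min'_le x hx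
    have hpred : ((V.filter (· < m)).max.unbotD 0) = a := by
      rcases ha with haV | ⟨ha0, hpos⟩
      · have hamem : a ∈ V.filter (· < m) := mem_filter.mpr ⟨haV, ham⟩
        have hane : (V.filter (· < m)).Nonempty := ⟨a, hamem⟩
        have hmax : (V.filter (· < m)).max' hane = a := by
          apply le_antisymm
          · apply Finset.max'_le
            intro x hx
            obtain ⟨hxV, hxm⟩ := mem_filter.mp hx
            by_contra hax
            push_neg at hax
            exact absurd (hminle x (mem_filter.mpr ⟨hxV, hax, hxm.le.trans hmb⟩))
              (not_le.mpr hxm)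
          · exact Finset.le_max' _ a hamem
        rw [← Finset.coe_max' hane, WithBot.unbotD_coe, hmax]
      · subst ha0
        have hemp : V.filter (· < m) = ∅ := by
          rw [filter_eq_empty_iff]
          intro x hxV hxm
          exact absurd (hminle x (mem_filter.mpr ⟨hxV, hpos x hxV, hxm.le.trans hmb⟩))
            (not_le.mpr hxm)
        rw [hemp]
        rfl
    have hsplit : B.erase m = V.filter (fun v => m < v ∧ v ≤ b) := by
      ext v
      simp only [mem_erase, hB, mem_filter]
      constructor
      · rintro ⟨hvm, hvV, hav, hvb⟩
        exact ⟨hvV, lt_of_le_of_ne (hminle v (mem_filter.mpr ⟨hvV, hav, hvb⟩)) (Ne.symm hvm), hvb⟩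
      · rintro ⟨hvV, hmv, hvb⟩
        exact ⟨ne_of_gt hmv, hvV, ham.trans hmv, hvb⟩
    have hsum := Finset.add_sum_erase B (fun v => v - ((V.filter (· < v)).max.unbotD 0)) hmB
    rcases eq_or_lt_of_le hmb with heq | hmltb
    · have hempty : B.erase m = ∅ := by
        rw [hsplit, filter_eq_empty_iff]
        rintro x hxV ⟨h1, h2⟩
        exact absurd h2 (not_le.mpr (heq ▸ h1))
      rw [← hsum, hempty]
      simp only [Finset.sum_empty, add_zero]
      rw [hpred, heq]
    · have hcard' : (V.filter (fun v => m < v ∧ v ≤ b)).card ≤ n := by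
        rw [← hsplit]
        have := Finset.card_erase_lt_of_mem hmB
        omega
      have hIH := IH V m b hcard' hb hmltb (Or.inl hmV)
      rw [← hsum, hsplit, hIH]
      show m - ((V.filter (· < m)).max.unbotD 0) + (b - m) = b - a
      rw [hpred]
      ring
end

section
variable {L : Type*} [SemilatticeInf L] [OrderBot L] [Fintype L] {G : Set L}
open Classical Finset
set_option linter.unusedVariables false
set_option linter.unusedSectionVars false
set_option maxHeartbeats 3200000

noncomputable def vAt (G : Set L) (w : L → ℝ) (X : L) : ℝ :=
  (((Ffin G X).image (tFun w)).min).untopD 0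

noncomputable def uAt (G : Set L) (w : L → ℝ) (X : L) : ℝ :=
  ((((univ.filter (fun g : L => w g ≠ 0)).image (tFun w))).filter (· < vAt G w X)).max.unbotD 0

noncomputable def reconF (G : Set L) (w : L → ℝ) : L → ℝ := fun X =>
  if X ≠ ⊥ ∧ IsLUB {g : L | w g ≠ 0 ∧ vAt G w X ≤ tFun w g} X
  then ((Ffin G X).card : ℝ) * (vAt G w X - uAt G w X) else 0

lemma chain_exists_bot {D : Finset L} (hD : IsChain (· ≤ ·) (D : Set L)) (hne : D.Nonempty) :
    ∃ m ∈ D, ∀ Z ∈ D, m ≤ Z := by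
  obtain ⟨m, hm, hmax⟩ := exists_minimal_compat D hne
  refine ⟨m, hm, fun Z hZ => ?_⟩
  rcases eq_or_ne Z m with rfl | hne'
  · exact le_rfl
  rcases hD (Finset.mem_coe.mpr hm) (Finset.mem_coe.mpr hZ) (fun h => hne' h.symm) with h | h
  · exact h
  · exact absurd (lt_of_le_of_ne h hne') (hmax Z hZ)

lemma chain_exists_top {D : Finset L} (hD : IsChain (· ≤ ·) (D : Set L)) (hne : D.Nonempty) :
    ∃ m ∈ D, ∀ Z ∈ D, Z ≤ m := by
  obtain ⟨m, hm, hmax⟩ := exists_maximal_compat D hne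
  refine ⟨m, hm, fun Z hZ => ?_⟩
  rcases eq_or_ne Z m with rfl | hne'
  · exact le_rfl
  rcases hD (Finset.mem_coe.mpr hZ) (Finset.mem_coe.mpr hm) hne' with h | h
  · exact h
  · exact absurd (lt_of_le_of_ne h (fun hc => hne' hc.symm)) (hmax Z hZ)
end

section
variable {L : Type*} [SemilatticeInf L] [OrderBot L] [Fintype L] {G : Set L}
open Classical Finset
set_option linter.unusedVariables false
set_option linter.unusedSectionVars false
set_option maxHeartbeats 3200000

theorem recon_phiMap (hG : IsBuilding L G) {f : L → ℝ} (hf0 : ∀ v, 0 ≤ f v)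
    {C : Finset L} (hCchain : IsChain (· ≤ ·) (C : Set L)) (hCbot : ∀ X ∈ C, X ≠ ⊥)
    (hsupp : ∀ v, f v ≠ 0 → v ∈ C) :
    reconF G (phiMap G f) = f := by
  classical
  set w := phiMap G f with hwdef
  set C₀ : Finset L := univ.filter (fun X => f X ≠ 0) with hC₀
  have hmemC₀ : ∀ {X}, X ∈ C₀ ↔ f X ≠ 0 := fun {X} => by simp [hC₀]
  have hC₀C : C₀ ⊆ C := fun X hX => hsupp X (hmemC₀.mp hX)
  have hC₀chain : IsChain (· ≤ ·) (C₀ : Set L) := hCchain.mono (Finset.coe_subset.mpr hC₀C)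
  have hC₀bot : ∀ X ∈ C₀, X ≠ ⊥ := fun X hX => hCbot X (hC₀C hX)
  have hfpos : ∀ X ∈ C₀, 0 < f X := fun X hX => lt_of_le_of_ne (hf0 X) (Ne.symm (hmemC₀.mp hX))
  have hnpos : ∀ X : L, X ≠ ⊥ → 0 < ((Ffin G X).card : ℝ) := by
    intro X hX
    obtain ⟨g, hg⟩ := factors_nonempty hG hX
    exact_mod_cast Finset.card_pos.mpr ⟨g, mem_Ffin.mpr hg⟩
  have hterm : ∀ X ∈ C₀, 0 < f X / ((Ffin G X).card : ℝ) :=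
    fun X hX => div_pos (hfpos X hX) (hnpos X (hC₀bot X hX))
  have hcomp : ∀ Z ∈ C₀, ∀ X' ∈ C₀, Z ≤ X' ∨ X' ≤ Z := by
    intro Z hZ X' hX'
    rcases eq_or_ne Z X' with rfl | hne
    · exact Or.inl le_rfl
    · exact hC₀chain (Finset.mem_coe.mpr hZ) (Finset.mem_coe.mpr hX') hne
  set τ : L → ℝ := fun Z => ∑ W ∈ C₀.filter (fun W => Z ≤ W), f W / ((Ffin G W).card : ℝ)
    with hτdef
  -- (I1)
  have hw : ∀ g, w g = ∑ Z ∈ C₀.filter (fun Z => g ∈ factorsSet G Z),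
      f Z / ((Ffin G Z).card : ℝ) := by
    intro g
    rw [hwdef, phiMap]
    symm
    apply Finset.sum_subset
    · intro Z hZ
      simp only [mem_filter, mem_univ, true_and] at hZ ⊢
      exact hZ.2
    · intro Z hZ hZn
      simp only [mem_filter, mem_univ, true_and] at hZ
      have hz0 : Z ∉ C₀ := fun hc => hZn (mem_filter.mpr ⟨hc, hZ⟩)
      have hfz : f Z = 0 := by by_contra h; exact hz0 (hmemC₀.mpr h)
      rw [hfz, zero_div]
  -- (I2)
  have hsuppw : ∀ g, w g ≠ 0 ↔ g ∈ UF G C₀ := by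
    intro g
    rw [hw g, mem_UF]
    constructor
    · intro hne
      by_contra hcon
      push_neg at hcon
      have hemp : C₀.filter (fun Z => g ∈ factorsSet G Z) = ∅ :=
        filter_eq_empty_iff.mpr (fun {Z} hZ hgZ => hcon Z hZ hgZ)
      rw [hemp] at hne
      simp at hne
    · rintro ⟨Z, hZ, hgZ⟩
      have hpos : 0 < ∑ W ∈ C₀.filter (fun W => g ∈ factorsSet G W),
          f W / ((Ffin G W).card : ℝ) :=
        Finset.sum_pos (fun W hW => hterm W (mem_of_mem_filter W hW))
          ⟨Z, mem_filter.mpr ⟨hZ, hgZ⟩⟩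
      exact ne_of_gt hpos
  -- (I3)
  have ht : ∀ g ∈ G, tFun w g = τ g := by
    intro g hg
    rw [tFun]
    have h1 : ∀ h ∈ univ.filter (fun h : L => g ≤ h),
        w h = ∑ Z ∈ C₀, if h ∈ factorsSet G Z then f Z / ((Ffin G Z).card : ℝ) else 0 := by
      intro h _
      rw [hw h, Finset.sum_filter]
    rw [Finset.sum_congr rfl h1, Finset.sum_comm]
    have h2 : ∀ Z ∈ C₀,
        (∑ h ∈ univ.filter (fun h : L => g ≤ h),
          if h ∈ factorsSet G Z then f Z / ((Ffin G Z).card : ℝ) else 0)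
        = if g ≤ Z then f Z / ((Ffin G Z).card : ℝ) else 0 := by
      intro Z hZ
      rw [← Finset.sum_filter]
      have hff : (univ.filter (fun h : L => g ≤ h)).filter (fun h => h ∈ factorsSet G Z)
          = (Ffin G Z).filter (fun h => g ≤ h) := by
        ext x
        simp only [mem_filter, mem_univ, true_and, mem_Ffin]
        tauto
      rw [hff, Finset.sum_const]
      by_cases hgZ : g ≤ Z
      · rw [factor_filter_card_one hG (hC₀bot Z hZ) hg hgZ, if_pos hgZ, one_nsmul]
      · rw [factor_filter_card_zero hgZ, if_neg hgZ, zero_nsmul]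
    rw [Finset.sum_congr rfl h2, ← Finset.sum_filter]
  -- τ monotonicity
  have hτmono : ∀ Z X' : L, Z ≤ X' → τ X' ≤ τ Z := by
    intro Z X' hZX'
    apply Finset.sum_le_sum_of_subset_of_nonneg
    · intro W hW
      simp only [mem_filter] at hW ⊢
      exact ⟨hW.1, hZX'.trans hW.2⟩
    · intro i hi _
      exact (hterm i (mem_of_mem_filter i hi)).le
  have hτstrict : ∀ Z X', Z ∈ C₀ → Z < X' → τ X' < τ Z := by
    intro Z X' hZ hZX'
    apply Finset.sum_lt_sum_of_subset (i := Z)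
    · intro W hW
      simp only [mem_filter] at hW ⊢
      exact ⟨hW.1, hZX'.le.trans hW.2⟩
    · exact mem_filter.mpr ⟨hZ, le_rfl⟩
    · simp only [mem_filter]
      rintro ⟨-, hc⟩
      exact absurd hc hZX'.not_ge
    · exact hterm Z hZ
    · intro i hi _
      exact (hterm i (mem_of_mem_filter i hi)).le
  -- minimal chain element above g, and t-value
  have hmg : ∀ g ∈ UF G C₀, ∃ m ∈ C₀, g ≤ m ∧ (∀ Z ∈ C₀, g ≤ Z → m ≤ Z)
      ∧ g ∈ factorsSet G m ∧ tFun w g = τ m := by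
    intro g hgUF
    obtain ⟨Z', hZ', hgZ'⟩ := mem_UF.mp hgUF
    have hDchain : IsChain (· ≤ ·) ((C₀.filter (fun Z => g ≤ Z)) : Set L) :=
      hC₀chain.mono (Finset.coe_subset.mpr (filter_subset _ _))
    obtain ⟨m, hmD, hmle⟩ := chain_exists_bot hDchain ⟨Z', mem_filter.mpr ⟨hZ', hgZ'.2.1⟩⟩
    have hmC₀ := mem_of_mem_filter m hmD
    have hgm := (mem_filter.mp hmD).2
    have hmin : ∀ Z ∈ C₀, g ≤ Z → m ≤ Z := fun Z hZ hgZ => hmle Z (mem_filter.mpr ⟨hZ, hgZ⟩)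
    refine ⟨m, hmC₀, hgm, hmin,
      factor_of_le (hmin Z' hZ' hgZ'.2.1) hgZ' hgm, ?_⟩
    rw [ht g hgZ'.1]
    apply Finset.sum_congr ?_ (fun _ _ => rfl)
    ext Z
    simp only [mem_filter]
    constructor
    · rintro ⟨hZ, hgZ⟩
      exact ⟨hZ, hmin Z hZ hgZ⟩
    · rintro ⟨hZ, hmZ⟩
      exact ⟨hZ, hgm.trans hmZ⟩
  -- witness attaining the minimum on factors
  have hwitness : ∀ X ∈ C₀, ∃ g, g ∈ Ffin G X ∧ tFun w g = τ X := by
    intro X hX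
    have hXbot := hC₀bot X hX
    have hFne : (factorsSet G X).Nonempty := factors_nonempty hG hXbot
    have hgex : ∃ g ∈ Ffin G X, ∀ Z ∈ C₀.filter (fun Z => Z < X), ¬ g ≤ Z := by
      rcases (C₀.filter (fun Z => Z < X)).eq_empty_or_nonempty with hemp | hne
      · obtain ⟨g, hg⟩ := hFne
        exact ⟨g, mem_Ffin.mpr hg, by rw [hemp]; intro Z hZ; simp at hZ⟩
      · obtain ⟨Zs, hZsCl, hZstop⟩ := chain_exists_top
          (hC₀chain.mono (Finset.coe_subset.mpr (filter_subset _ _))) hne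
        by_contra hcon
        push_neg at hcon
        have hub : X ≤ Zs := by
          apply (isLUB_factors hG hXbot).2
          intro g hgF
          obtain ⟨Z, hZCl, hgZ⟩ := hcon g (mem_Ffin.mpr hgF)
          exact hgZ.trans (hZstop Z hZCl)
        exact absurd hub (mem_filter.mp hZsCl).2.not_ge
    obtain ⟨g, hgF, hgno⟩ := hgex
    refine ⟨g, hgF, ?_⟩
    rw [ht g (mem_Ffin.mp hgF).1]
    apply Finset.sum_congr ?_ (fun _ _ => rfl)
    ext Z
    simp only [mem_filter]
    constructor
    · rintro ⟨hZ, hgZ⟩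
      refine ⟨hZ, ?_⟩
      rcases hcomp Z hZ X hX with h | h
      · rcases eq_or_ne Z X with rfl | hne'
        · exact le_rfl
        · exact absurd hgZ (hgno Z (mem_filter.mpr ⟨hZ, lt_of_le_of_ne h hne'⟩))
      · exact h
    · rintro ⟨hZ, hXZ⟩
      exact ⟨hZ, (mem_Ffin.mp hgF).2.1.trans hXZ⟩
  have htge : ∀ X ∈ C₀, ∀ g ∈ Ffin G X, τ X ≤ tFun w g := by
    intro X hX g hgF
    rw [ht g (mem_Ffin.mp hgF).1]
    exact hτmono g X (mem_Ffin.mp hgF).2.1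
  -- vAt = τ
  have hvAt : ∀ X ∈ C₀, vAt G w X = τ X := by
    intro X hX
    have hFne : (Ffin G X).Nonempty := by
      obtain ⟨g, hg⟩ := factors_nonempty hG (hC₀bot X hX)
      exact ⟨g, mem_Ffin.mpr hg⟩
    have hne : ((Ffin G X).image (tFun w)).Nonempty := hFne.image _
    rw [vAt, ← Finset.coe_min' hne, WithTop.untopD_coe]
    apply le_antisymm
    · obtain ⟨g, hgF, hgt⟩ := hwitness X hX
      exact (Finset.min'_le _ _ (mem_image_of_mem _ hgF)).trans (le_of_eq hgt)
    · apply Finset.le_min'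
      intro y hy
      obtain ⟨g, hgF, rfl⟩ := mem_image.mp hy
      exact htge X hX g hgF
  -- level sets
  have hlevel : ∀ X ∈ C₀, {g : L | w g ≠ 0 ∧ vAt G w X ≤ tFun w g}
      = ↑(UF G (C₀.filter (· ≤ X))) := by
    intro X hX
    ext g
    simp only [Set.mem_setOf_eq, Finset.mem_coe, mem_UF]
    constructor
    · rintro ⟨hwg, hvle⟩
      obtain ⟨m, hmC₀, hgm, hmmin, hgFm, htg⟩ := hmg g ((hsuppw g).mp hwg)
      have hmX : m ≤ X := by
        by_contra hcon
        have hXm : X < m := by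
          rcases hcomp m hmC₀ X hX with h | h
          · exact absurd h hcon
          · exact lt_of_le_of_ne h (fun hc => hcon (le_of_eq hc.symm))
        have hlt := hτstrict X m hX hXm
        rw [hvAt X hX, htg] at hvle
        exact absurd hvle hlt.not_ge
      exact ⟨m, mem_filter.mpr ⟨hmC₀, hmX⟩, hgFm⟩
    · rintro ⟨Z, hZf, hgZ⟩
      obtain ⟨hZC₀, hZX⟩ := mem_filter.mp hZf
      refine ⟨(hsuppw g).mpr (mem_UF.mpr ⟨Z, hZC₀, hgZ⟩), ?_⟩
      rw [hvAt X hX, ht g hgZ.1]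
      exact (hτmono Z X hZX).trans (hτmono g Z hgZ.2.1)
  have hUFlub : ∀ X ∈ C₀, IsLUB (↑(UF G (C₀.filter (· ≤ X))) : Set L) X := by
    intro X hX
    constructor
    · intro g hg
      obtain ⟨Z, hZf, hgZ⟩ := mem_UF.mp (Finset.mem_coe.mp hg)
      exact hgZ.2.1.trans (mem_filter.mp hZf).2
    · intro Z hZ
      apply (isLUB_factors hG (hC₀bot X hX)).2
      intro g hgF
      exact hZ (Finset.mem_coe.mpr (mem_UF.mpr ⟨X, mem_filter.mpr ⟨hX, le_rfl⟩, hgF⟩))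
  -- the image of t on the support is the image of τ on the chain
  have himg : (univ.filter (fun g : L => w g ≠ 0)).image (tFun w) = C₀.image τ := by
    ext y
    simp only [mem_image, mem_filter, mem_univ, true_and]
    constructor
    · rintro ⟨g, hgw, rfl⟩
      obtain ⟨m, hm, -, -, -, htg⟩ := hmg g ((hsuppw g).mp hgw)
      exact ⟨m, hm, htg.symm⟩
    · rintro ⟨Z, hZ, rfl⟩
      obtain ⟨g, hgF, hgt⟩ := hwitness Z hZ
      exact ⟨g, (hsuppw g).mpr (mem_UF.mpr ⟨Z, hZ, mem_Ffin.mp hgF⟩), hgt⟩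
  -- value computation
  have hval : ∀ X ∈ C₀, ((Ffin G X).card : ℝ) * (vAt G w X - uAt G w X) = f X := by
    intro X hX
    have hn0 : ((Ffin G X).card : ℝ) ≠ 0 := ne_of_gt (hnpos X (hC₀bot X hX))
    rw [uAt, himg, hvAt X hX]
    rcases (C₀.filter (fun Z => X < Z)).eq_empty_or_nonempty with hemp | hne
    · have hf1 : (C₀.image τ).filter (· < τ X) = ∅ := by
        rw [filter_eq_empty_iff]
        intro y hy
        obtain ⟨Z, hZ, rfl⟩ := mem_image.mp hy
        have hZX : Z ≤ X := by
          rcases hcomp Z hZ X hX with h | h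
          · exact h
          · rcases eq_or_ne X Z with rfl | hne'
            · exact le_rfl
            · have : Z ∈ C₀.filter (fun Z => X < Z) :=
                mem_filter.mpr ⟨hZ, lt_of_le_of_ne h hne'⟩
              rw [hemp] at this
              simp at this
        exact not_lt.mpr (hτmono Z X hZX)
      rw [hf1]
      have hτX : τ X = f X / ((Ffin G X).card : ℝ) := by
        have hsing : C₀.filter (fun W => X ≤ W) = {X} := by
          ext Z
          simp only [mem_filter, mem_singleton]
          constructor
          · rintro ⟨hZ, hXZ⟩
            by_contra hne'
            have : Z ∈ C₀.filter (fun Z => X < Z) :=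
              mem_filter.mpr ⟨hZ, lt_of_le_of_ne hXZ (Ne.symm hne')⟩
            rw [hemp] at this
            simp at this
          · rintro rfl
            exact ⟨hX, le_rfl⟩
        rw [hτdef]
        simp only
        rw [hsing, Finset.sum_singleton]
      rw [hτX]
      simp only [Finset.max_empty, WithBot.unbotD_bot, sub_zero]
      field_simp
    · obtain ⟨Xp, hXpCu, hXpmin⟩ := chain_exists_bot
        (hC₀chain.mono (Finset.coe_subset.mpr (filter_subset _ _))) hne
      have hXpC₀ := mem_of_mem_filter Xp hXpCu
      have hXXp : X < Xp := (mem_filter.mp hXpCu).2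
      have hfmem : τ Xp ∈ (C₀.image τ).filter (· < τ X) :=
        mem_filter.mpr ⟨mem_image_of_mem τ hXpC₀, hτstrict X Xp hX hXXp⟩
      have hne2 : ((C₀.image τ).filter (· < τ X)).Nonempty := ⟨_, hfmem⟩
      have hmax : ((C₀.image τ).filter (· < τ X)).max' hne2 = τ Xp := by
        apply le_antisymm
        · apply Finset.max'_le
          intro y hy
          obtain ⟨hyim, hylt⟩ := mem_filter.mp hy
          obtain ⟨Z, hZ, rfl⟩ := mem_image.mp hyim
          have hXZ : X < Z := by
            by_contra hcon
            have hZX : Z ≤ X := by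
              rcases hcomp Z hZ X hX with h | h
              · exact h
              · rcases eq_or_ne X Z with rfl | hne'
                · exact le_rfl
                · exact absurd (lt_of_le_of_ne h hne') hcon
            exact absurd hylt (not_lt.mpr (hτmono Z X hZX))
          exact hτmono Xp Z (hXpmin Z (mem_filter.mpr ⟨hZ, hXZ⟩))
        · exact Finset.le_max' _ _ hfmem
      rw [← Finset.coe_max' hne2, WithBot.unbotD_coe, hmax]
      have hsplitτ : τ X = f X / ((Ffin G X).card : ℝ) + τ Xp := by
        have hins : C₀.filter (fun W => X ≤ W) = insert X (C₀.filter (fun W => Xp ≤ W)) := by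
          ext Z
          simp only [mem_insert, mem_filter]
          constructor
          · rintro ⟨hZ, hXZ⟩
            rcases eq_or_ne Z X with rfl | hne'
            · exact Or.inl rfl
            · exact Or.inr ⟨hZ, hXpmin Z (mem_filter.mpr ⟨hZ, lt_of_le_of_ne hXZ (Ne.symm hne')⟩)⟩
          · rintro (rfl | ⟨hZ, hXpZ⟩)
            · exact ⟨hX, le_rfl⟩
            · exact ⟨hZ, (le_of_lt hXXp).trans hXpZ⟩
        have hnotmem : X ∉ C₀.filter (fun W => Xp ≤ W) := by
          simp only [mem_filter]
          rintro ⟨-, hXpX⟩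
          exact absurd hXpX hXXp.not_ge
        rw [hτdef]
        simp only
        rw [hins, Finset.sum_insert hnotmem]
      rw [hsplitτ]
      have : f X / ((Ffin G X).card : ℝ) + τ Xp - τ Xp = f X / ((Ffin G X).card : ℝ) := by ring
      rw [this]
      field_simp
  -- conclusion
  funext X
  by_cases hXC₀ : X ∈ C₀
  · have hcond : X ≠ ⊥ ∧ IsLUB {g : L | w g ≠ 0 ∧ vAt G w X ≤ tFun w g} X := by
      refine ⟨hC₀bot X hXC₀, ?_⟩
      rw [hlevel X hXC₀]
      exact hUFlub X hXC₀
    simp only [reconF]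
    rw [if_pos hcond]
    exact hval X hXC₀
  · have hfX : f X = 0 := by
      by_contra h
      exact hXC₀ (hmemC₀.mpr h)
    have hnot : ¬ (X ≠ ⊥ ∧ IsLUB {g : L | w g ≠ 0 ∧ vAt G w X ≤ tFun w g} X) := by
      rintro ⟨hXbot, hlub⟩
      rcases Set.eq_empty_or_nonempty {g : L | w g ≠ 0 ∧ vAt G w X ≤ tFun w g} with hemp | hVne
      · rw [hemp] at hlub
        exact hXbot (isLUB_empty_bot' hlub)
      · obtain ⟨g₀, hg₀⟩ := hVne
        obtain ⟨m₀, hm₀C₀, -, -, -, htg₀⟩ := hmg g₀ ((hsuppw g₀).mp hg₀.1)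
        have hEne : (C₀.filter (fun Z => vAt G w X ≤ τ Z)).Nonempty :=
          ⟨m₀, mem_filter.mpr ⟨hm₀C₀, htg₀ ▸ hg₀.2⟩⟩
        obtain ⟨Z₀, hZ₀E, hZ₀top⟩ := chain_exists_top
          (hC₀chain.mono (Finset.coe_subset.mpr (filter_subset _ _))) hEne
        have hZ₀C₀ := mem_of_mem_filter Z₀ hZ₀E
        have hVeq : {g : L | w g ≠ 0 ∧ vAt G w X ≤ tFun w g}
            = ↑(UF G (C₀.filter (· ≤ Z₀))) := by
          ext g
          simp only [Set.mem_setOf_eq, Finset.mem_coe, mem_UF]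
          constructor
          · rintro ⟨hwg, hvle⟩
            obtain ⟨m, hmC₀, hgm, hmmin, hgFm, htg⟩ := hmg g ((hsuppw g).mp hwg)
            have hmE : m ∈ C₀.filter (fun Z => vAt G w X ≤ τ Z) :=
              mem_filter.mpr ⟨hmC₀, htg ▸ hvle⟩
            exact ⟨m, mem_filter.mpr ⟨hmC₀, hZ₀top m hmE⟩, hgFm⟩
          · rintro ⟨Z, hZf, hgZ⟩
            obtain ⟨hZC₀, hZZ₀⟩ := mem_filter.mp hZf
            refine ⟨(hsuppw g).mpr (mem_UF.mpr ⟨Z, hZC₀, hgZ⟩), ?_⟩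
            have h1 : τ Z ≤ tFun w g := by
              rw [ht g hgZ.1]
              exact hτmono g Z hgZ.2.1
            have h2 : τ Z₀ ≤ τ Z := hτmono Z Z₀ hZZ₀
            have h3 : vAt G w X ≤ τ Z₀ := (mem_filter.mp hZ₀E).2
            linarith
        rw [hVeq] at hlub
        exact hXC₀ ((hlub.unique (hUFlub Z₀ hZ₀C₀)) ▸ hZ₀C₀)
    simp only [reconF]
    rw [if_neg hnot, hfX]
end

section
variable {L : Type*} [SemilatticeInf L] [OrderBot L] [Fintype L] {G : Set L}
open Classical Finset
set_option linter.unusedVariables false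
set_option linter.unusedSectionVars false
set_option maxHeartbeats 3200000

theorem phiMap_surj (hG : IsBuilding L G) {w : L → ℝ} (hw0 : ∀ g, 0 ≤ w g)
    {s : Finset L} (hs : IsNested G s) (hsupp : ∀ g, w g ≠ 0 → g ∈ s)
    (hsum : ∑ g ∈ s, w g = 1) :
    ∃ f : L → ℝ, (∀ v, 0 ≤ f v) ∧ (∃ c : Finset L, IsChain (· ≤ ·) (c : Set L)
      ∧ (∀ X ∈ c, X ≠ ⊥) ∧ (∀ v, f v ≠ 0 → v ∈ c) ∧ ∑ X ∈ c, f X = 1)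
    ∧ phiMap G f = w := by
  classical
  set S : Finset L := univ.filter (fun g => w g ≠ 0) with hSdef
  have hmemS : ∀ {g}, g ∈ S ↔ w g ≠ 0 := fun {g} => by simp [hSdef]
  have hSs : S ⊆ s := fun g hg => hsupp g (hmemS.mp hg)
  have hS : IsNested G S :=
    ⟨fun g hg => hs.1 (hSs (Finset.mem_coe.mp hg)),
     fun A hA hanti hcard => hs.2 A (hA.trans hSs) hanti hcard⟩
  have hSG : ∀ g ∈ S, g ∈ G := fun g hg => hS.1 (Finset.mem_coe.mpr hg)
  have hwpos : ∀ g ∈ S, 0 < w g := fun g hg => lt_of_le_of_ne (hw0 g) (Ne.symm (hmemS.mp hg))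
  have hSsum : ∑ g ∈ S, w g = 1 := by
    rw [← hsum]
    apply Finset.sum_subset hSs
    intro x _ hx
    by_contra h
    exact hx (hmemS.mpr h)
  -- t basics
  have htan : ∀ a b : L, a ≤ b → tFun w b ≤ tFun w a := by
    intro a b hab
    apply Finset.sum_le_sum_of_subset_of_nonneg
    · intro x hx
      simp only [mem_filter, mem_univ, true_and] at hx ⊢
      exact hab.trans hx
    · intro i _ _
      exact hw0 i
  have htpos : ∀ g ∈ S, 0 < tFun w g := by
    intro g hg
    have h1 : w g ≤ tFun w g := by
      apply Finset.single_le_sum (fun i _ => hw0 i)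
      simp
    exact lt_of_lt_of_le (hwpos g hg) h1
  have htstrict : ∀ g ∈ S, ∀ h : L, g < h → tFun w h < tFun w g := by
    intro g hg h hgh
    apply Finset.sum_lt_sum_of_subset (i := g)
    · intro x hx
      simp only [mem_filter, mem_univ, true_and] at hx ⊢
      exact hgh.le.trans hx
    · simp
    · simp only [mem_filter, mem_univ, true_and]
      exact fun hc => absurd hc hgh.not_ge
    · exact hwpos g hg
    · intro i _ _
      exact hw0 i
  -- t restricted to S
  have htS : ∀ g : L, tFun w g = ∑ h ∈ S.filter (fun h => g ≤ h), w h := by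
    intro g
    rw [tFun]
    symm
    apply Finset.sum_subset
    · intro x hx
      simp only [mem_filter, mem_univ, true_and] at hx ⊢
      exact hx.2
    · intro x hx hx'
      simp only [mem_filter, mem_univ, true_and] at hx
      by_contra h
      exact hx' (mem_filter.mpr ⟨hmemS.mpr h, hx⟩)
  set V : Finset ℝ := S.image (tFun w) with hVdef
  have hVpos : ∀ v ∈ V, 0 < v := by
    intro v hv
    obtain ⟨g, hg, rfl⟩ := mem_image.mp hv
    exact htpos g hg
  set U : ℝ → Finset L := fun v => S.filter (fun g => v ≤ tFun w g) with hUdef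
  have hUne : ∀ v ∈ V, (U v).Nonempty := by
    intro v hv
    obtain ⟨g, hg, hgt⟩ := mem_image.mp hv
    exact ⟨g, mem_filter.mpr ⟨hg, le_of_eq hgt.symm⟩⟩
  -- the LUB of each level set
  set Xv : ℝ → L := fun v =>
    if hv : ∃ X, IsLUB ((U v : Finset L) : Set L) X
        ∧ factorsSet G X = ↑(maxels (U v)) ∧ X ≠ ⊥ then hv.choose else ⊥ with hXvdef
  have hXvspec : ∀ v ∈ V, IsLUB ((U v : Finset L) : Set L) (Xv v)
      ∧ factorsSet G (Xv v) = ↑(maxels (U v)) ∧ Xv v ≠ ⊥ := by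
    intro v hv
    have hev : ∃ X, IsLUB ((U v : Finset L) : Set L) X
        ∧ factorsSet G X = ↑(maxels (U v)) ∧ X ≠ ⊥ :=
      downset_lub hG hS (filter_subset _ _) (hUne v hv)
    rw [hXvdef]
    simp only [dif_pos hev]
    exact hev.choose_spec
  have hFfinXv : ∀ v ∈ V, Ffin G (Xv v) = maxels (U v) := by
    intro v hv
    ext x
    rw [mem_Ffin, (hXvspec v hv).2.1]
    exact Iff.rfl
  -- predecessor value and coefficients
  set predv : ℝ → ℝ := fun v => ((V.filter (· < v)).max.unbotD 0) with hpreddef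
  have hprednn : ∀ v ∈ V, 0 ≤ v - predv v := by
    intro v hv
    rcases (V.filter (· < v)).eq_empty_or_nonempty with hemp | hne
    · rw [hpreddef]
      simp only [hemp, Finset.max_empty, WithBot.unbotD_bot]
      linarith [hVpos v hv]
    · rw [hpreddef]
      simp only [← Finset.coe_max' hne, WithBot.unbotD_coe]
      have := (mem_filter.mp ((V.filter (· < v)).max'_mem hne)).2
      linarith
  set f : L → ℝ := fun X => ∑ v ∈ V.filter (fun v => Xv v = X),
      (v - predv v) * ((maxels (U v)).card : ℝ) with hfdef
  have hf0 : ∀ X, 0 ≤ f X := by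
    intro X
    apply Finset.sum_nonneg
    intro v hv
    exact mul_nonneg (hprednn v (mem_of_mem_filter v hv)) (by positivity)
  -- upper envelope of strictly larger elements
  set tp : L → ℝ := fun g => (((S.filter (fun h => g < h)).image (tFun w)).max.unbotD 0)
    with htpdef
  -- membership in maxels of level sets
  have hmaxmem : ∀ g ∈ S, ∀ v ∈ V, (g ∈ maxels (U v) ↔ tp g < v ∧ v ≤ tFun w g) := by
    intro g hg v hv
    constructor
    · intro hgm
      have hgU := maxels_subset hgm
      have hvt : v ≤ tFun w g := (mem_filter.mp hgU).2
      refine ⟨?_, hvt⟩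
      by_contra hcon
      push_neg at hcon
      rcases (S.filter (fun h => g < h)).eq_empty_or_nonempty with hemp | hne
      · rw [htpdef] at hcon
        simp only [hemp, image_empty, Finset.max_empty, WithBot.unbotD_bot] at hcon
        linarith [hVpos v hv]
      · have hne' : ((S.filter (fun h => g < h)).image (tFun w)).Nonempty := hne.image _
        have htp : tp g = ((S.filter (fun h => g < h)).image (tFun w)).max' hne' := by
          simp only [htpdef, ← Finset.coe_max' hne', WithBot.unbotD_coe]
        obtain ⟨h, hh, hth⟩ := mem_image.mp (Finset.max'_mem _ hne')
        obtain ⟨hhS, hgh⟩ := mem_filter.mp hh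
        have hhU : h ∈ U v := mem_filter.mpr ⟨hhS, by rw [hth, ← htp] at *; linarith⟩
        have := (mem_filter.mp hgm).2 h hhU hgh.le
        exact absurd this hgh.ne
    · rintro ⟨htpv, hvt⟩
      rw [maxels, mem_filter]
      refine ⟨mem_filter.mpr ⟨hg, hvt⟩, ?_⟩
      intro h hhU hgh
      by_contra hne'
      have hgh' : g < h := lt_of_le_of_ne hgh hne'
      have hhS := (mem_filter.mp hhU).1
      have hvth : v ≤ tFun w h := (mem_filter.mp hhU).2
      have hth_le : tFun w h ≤ tp g := by
        have hmem : tFun w h ∈ (S.filter (fun h => g < h)).image (tFun w) :=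
          mem_image_of_mem _ (mem_filter.mpr ⟨hhS, hgh'⟩)
        have hne2 : ((S.filter (fun h => g < h)).image (tFun w)).Nonempty := ⟨_, hmem⟩
        simp only [htpdef, ← Finset.coe_max' hne2, WithBot.unbotD_coe]
        exact Finset.le_max' _ _ hmem
      linarith
  -- forest identity : t g - tp g = w g
  have hforest : ∀ g ∈ S, tFun w g - tp g = w g := by
    intro g hg
    rcases (S.filter (fun h => g < h)).eq_empty_or_nonempty with hemp | hne
    · have h1 : tFun w g = w g := by
        rw [htS g]
        have : S.filter (fun h => g ≤ h) = {g} := by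
          ext x
          simp only [mem_filter, mem_singleton]
          constructor
          · rintro ⟨hx, hgx⟩
            by_contra hne'
            have : x ∈ S.filter (fun h => g < h) :=
              mem_filter.mpr ⟨hx, lt_of_le_of_ne hgx (Ne.symm hne')⟩
            rw [hemp] at this
            simp at this
          · rintro rfl
            exact ⟨hg, le_rfl⟩
        rw [this, Finset.sum_singleton]
      have h2 : tp g = 0 := by
        rw [htpdef]
        simp only [hemp, image_empty, Finset.max_empty, WithBot.unbotD_bot]
      rw [h1, h2, sub_zero]
    · -- elements above g form a chain; h₀ its minimum
      have hchainA : IsChain (· ≤ ·) ((S.filter (fun h => g < h)) : Set L) := by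
        intro x hx y hy hxy
        obtain ⟨hxS, hgx⟩ := mem_filter.mp (Finset.mem_coe.mp hx)
        obtain ⟨hyS, hgy⟩ := mem_filter.mp (Finset.mem_coe.mp hy)
        exact nested_forest hG hS (hSG g hg) hxS hyS hgx.le hgy.le
      obtain ⟨h₀, hh₀, hh₀min⟩ := chain_exists_bot hchainA hne
      obtain ⟨hh₀S, hgh₀⟩ := mem_filter.mp hh₀
      have hAeq : S.filter (fun h => g < h) = S.filter (fun h => h₀ ≤ h) := by
        ext x
        simp only [mem_filter]
        constructor
        · rintro ⟨hx, hgx⟩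
          exact ⟨hx, hh₀min x (mem_filter.mpr ⟨hx, hgx⟩)⟩
        · rintro ⟨hx, hh₀x⟩
          exact ⟨hx, lt_of_lt_of_le hgh₀ hh₀x⟩
      have h1 : tFun w g = w g + tFun w h₀ := by
        rw [htS g, htS h₀]
        have hins : S.filter (fun h => g ≤ h)
            = insert g (S.filter (fun h => h₀ ≤ h)) := by
          rw [← hAeq]
          ext x
          simp only [mem_insert, mem_filter]
          constructor
          · rintro ⟨hx, hgx⟩
            rcases eq_or_ne x g with rfl | hne'
            · exact Or.inl rfl
            · exact Or.inr ⟨hx, lt_of_le_of_ne hgx (Ne.symm hne')⟩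
          · rintro (rfl | ⟨hx, hgx⟩)
            · exact ⟨hg, le_rfl⟩
            · exact ⟨hx, hgx.le⟩
        rw [hins, Finset.sum_insert]
        rw [← hAeq]
        simp only [mem_filter]
        rintro ⟨-, hc⟩
        exact absurd hc (lt_irrefl g)
      have h2 : tp g = tFun w h₀ := by
        have hmem : tFun w h₀ ∈ (S.filter (fun h => g < h)).image (tFun w) :=
          mem_image_of_mem _ hh₀
        have hne2 : ((S.filter (fun h => g < h)).image (tFun w)).Nonempty := ⟨_, hmem⟩
        simp only [htpdef, ← Finset.coe_max' hne2, WithBot.unbotD_coe]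
        apply le_antisymm
        · apply Finset.max'_le
          intro y hy
          obtain ⟨x, hx, rfl⟩ := mem_image.mp hy
          exact htan h₀ x (hh₀min x hx)
        · exact Finset.le_max' _ _ hmem
      rw [h1, h2]
      ring
  -- the key telescoping identity per generator
  have hkey : ∀ g ∈ S, ∑ v ∈ V.filter (fun v => g ∈ maxels (U v)), (v - predv v) = w g := by
    intro g hg
    have hfilt : V.filter (fun v => g ∈ maxels (U v))
        = V.filter (fun v => tp g < v ∧ v ≤ tFun w g) := by
      apply Finset.filter_congr
      intro v hv
      exact hmaxmem g hg v hv
    rw [hfilt]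
    have hbV : tFun w g ∈ V := mem_image_of_mem _ hg
    have hside : tp g ∈ V ∨ (tp g = 0 ∧ ∀ v ∈ V, 0 < v) := by
      rcases (S.filter (fun h => g < h)).eq_empty_or_nonempty with hemp | hne
      · refine Or.inr ⟨?_, hVpos⟩
        rw [htpdef]
        simp only [hemp, image_empty, Finset.max_empty, WithBot.unbotD_bot]
      · left
        have hne2 : ((S.filter (fun h => g < h)).image (tFun w)).Nonempty := hne.image _
        have : tp g = ((S.filter (fun h => g < h)).image (tFun w)).max' hne2 := by
          simp only [htpdef, ← Finset.coe_max' hne2, WithBot.unbotD_coe]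
        rw [this]
        obtain ⟨x, hx, hxe⟩ := mem_image.mp (Finset.max'_mem _ hne2)
        rw [← hxe]
        exact mem_image_of_mem _ (mem_of_mem_filter x hx)
    have hab : tp g < tFun w g := by
      have := hforest g hg
      have := hwpos g hg
      linarith
    simp only [hpreddef]
    rw [telescope_aux (V.filter (fun v => tp g < v ∧ v ≤ tFun w g)).card V (tp g) (tFun w g)
      le_rfl hbV hab hside]
    exact hforest g hg
  set c : Finset L := V.image Xv with hcdef
  have hcchain : IsChain (· ≤ ·) (c : Set L) := by
    intro x hx y hy hne
    obtain ⟨v, hv, rfl⟩ := mem_image.mp (Finset.mem_coe.mp hx)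
    obtain ⟨v', hv', rfl⟩ := mem_image.mp (Finset.mem_coe.mp hy)
    have key : ∀ a b, a ∈ V → b ∈ V → a ≤ b → Xv b ≤ Xv a := by
      intro a b ha hb hab
      apply ((hXvspec b hb).1).2
      intro x hxU
      apply ((hXvspec a ha).1).1
      obtain ⟨hxS, hbt⟩ := mem_filter.mp (Finset.mem_coe.mp hxU)
      exact Finset.mem_coe.mpr (mem_filter.mpr ⟨hxS, hab.trans hbt⟩)
    rcases le_total v v' with h | h
    · exact Or.inr (key v v' hv hv' h)
    · exact Or.inl (key v' v hv' hv h)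
  have hcbot : ∀ X ∈ c, X ≠ ⊥ := by
    intro X hX
    obtain ⟨v, hv, rfl⟩ := mem_image.mp hX
    exact (hXvspec v hv).2.2
  have hfsupp : ∀ X, f X ≠ 0 → X ∈ c := by
    intro X hfX
    by_contra hXc
    apply hfX
    have hfe : V.filter (fun v => Xv v = X) = ∅ :=
      filter_eq_empty_iff.mpr (fun {v} hv heq => hXc (heq ▸ mem_image_of_mem Xv hv))
    simp only [hfdef]
    rw [hfe, Finset.sum_empty]
  have hnv : ∀ v ∈ V, 0 < ((maxels (U v)).card : ℝ) := by
    intro v hv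
    obtain ⟨g, hgU⟩ := hUne v hv
    obtain ⟨m, hm, -⟩ := exists_le_maxels hgU
    exact_mod_cast card_pos.mpr ⟨m, hm⟩
  have hmaxS : ∀ v ∈ V, maxels (U v) ⊆ S := fun v hv => maxels_subset.trans (filter_subset _ _)
  have hsum1 : ∑ X ∈ c, f X = 1 := by
    have hfib := Finset.sum_fiberwise_of_maps_to (g := Xv) (s := V) (t := c)
      (fun v hv => mem_image_of_mem Xv hv) (fun v => (v - predv v) * ((maxels (U v)).card : ℝ))
    calc ∑ X ∈ c, f X
        = ∑ v ∈ V, (v - predv v) * ((maxels (U v)).card : ℝ) := by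
          rw [← hfib]
      _ = ∑ v ∈ V, ∑ g ∈ S, (if g ∈ maxels (U v) then (v - predv v) else 0) := by
          refine Finset.sum_congr rfl (fun v hv => ?_)
          rw [← Finset.sum_filter]
          have hme : S.filter (fun g => g ∈ maxels (U v)) = maxels (U v) := by
            ext x
            simp only [mem_filter]
            exact ⟨fun h => h.2, fun h => ⟨hmaxS v hv h, h⟩⟩
          rw [hme, Finset.sum_const, nsmul_eq_mul, mul_comm]
      _ = ∑ g ∈ S, ∑ v ∈ V, (if g ∈ maxels (U v) then (v - predv v) else 0) := Finset.sum_comm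
      _ = ∑ g ∈ S, w g := by
          refine Finset.sum_congr rfl (fun g hg => ?_)
          rw [← Finset.sum_filter]
          exact hkey g hg
      _ = 1 := hSsum
  have hphif : phiMap G f = w := by
    funext g
    by_cases hgS : g ∈ S
    · rw [phiMap]
      have hptw : ∀ X ∈ univ.filter (fun X => g ∈ factorsSet G X),
          f X / ((Ffin G X).card : ℝ) = ∑ v ∈ V.filter (fun v => Xv v = X), (v - predv v) := by
        intro X hX
        simp only [hfdef]
        rw [Finset.sum_div]
        refine Finset.sum_congr rfl (fun v hv => ?_)
        obtain ⟨hvV, hXv⟩ := mem_filter.mp hv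
        have hcardeq : ((Ffin G X).card : ℝ) = ((maxels (U v)).card : ℝ) := by
          rw [← hXv, hFfinXv v hvV]
        rw [hcardeq, mul_div_assoc, div_self (ne_of_gt (hnv v hvV)), mul_one]
      rw [Finset.sum_congr rfl hptw]
      have hstep : ∑ X ∈ univ.filter (fun X => g ∈ factorsSet G X),
          ∑ v ∈ V.filter (fun v => Xv v = X), (v - predv v)
          = ∑ v ∈ V.filter (fun v => g ∈ factorsSet G (Xv v)), (v - predv v) := by
        calc ∑ X ∈ univ.filter (fun X => g ∈ factorsSet G X),
            ∑ v ∈ V.filter (fun v => Xv v = X), (v - predv v)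
            = ∑ X ∈ univ.filter (fun X => g ∈ factorsSet G X),
              ∑ v ∈ V, if Xv v = X then (v - predv v) else 0 := by
              exact Finset.sum_congr rfl (fun X _ => by rw [Finset.sum_filter])
          _ = ∑ v ∈ V, ∑ X ∈ univ.filter (fun X => g ∈ factorsSet G X),
              if Xv v = X then (v - predv v) else 0 := Finset.sum_comm
          _ = ∑ v ∈ V, if g ∈ factorsSet G (Xv v) then (v - predv v) else 0 := by
              refine Finset.sum_congr rfl (fun v hv => ?_)
              rw [Finset.sum_ite_eq (univ.filter (fun X => g ∈ factorsSet G X)) (Xv v)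
                (fun _ => (v - predv v))]
              simp only [mem_filter, mem_univ, true_and]
          _ = ∑ v ∈ V.filter (fun v => g ∈ factorsSet G (Xv v)), (v - predv v) := by
              rw [Finset.sum_filter]
      rw [hstep]
      have hfeq : V.filter (fun v => g ∈ factorsSet G (Xv v))
          = V.filter (fun v => g ∈ maxels (U v)) := by
        apply Finset.filter_congr
        intro v hv
        rw [(hXvspec v hv).2.1]
        exact Finset.mem_coe
      rw [hfeq]
      exact hkey g hgS
    · have hwg : w g = 0 := by
        by_contra h
        exact hgS (hmemS.mpr h)
      rw [hwg, phiMap]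
      apply Finset.sum_eq_zero
      intro X hX
      have hgF : g ∈ factorsSet G X := by
        simpa using (mem_filter.mp hX).2
      have hfX : f X = 0 := by
        by_contra h
        obtain ⟨v, hv, rfl⟩ := mem_image.mp (hfsupp X h)
        have : g ∈ maxels (U v) := by
          have := hgF
          rw [(hXvspec v hv).2.1] at this
          exact Finset.mem_coe.mp this
        exact hgS (hmaxS v hv this)
      rw [hfX, zero_div]
  exact ⟨f, hf0, ⟨c, hcchain, hcbot, hfsupp, hsum1⟩, hphif⟩
end

section
variable {L : Type*} [SemilatticeInf L] [OrderBot L] [Fintype L] {G : Set L}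
open Classical Finset
set_option linter.unusedVariables false
set_option linter.unusedSectionVars false
set_option maxHeartbeats 3200000

/-- The face data of the image of a chain-supported weight function under `phiMap`. -/
lemma phiMap_face (hG : IsBuilding L G) {f : L → ℝ} (hf0 : ∀ v, 0 ≤ f v)
    {c : Finset L} (hchain : IsChain (· ≤ ·) (c : Set L))
    (hcbot : (c : Set L) ⊆ {x : L | x ≠ ⊥}) (hsupp : ∀ v, f v ≠ 0 → v ∈ c)
    (hsum : ∑ v ∈ c, f v = 1) :
    IsNested G (UF G (univ.filter (fun X => f X ≠ 0)))
    ∧ (∀ g, phiMap G f g ≠ 0 → g ∈ UF G (univ.filter (fun X => f X ≠ 0)))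
    ∧ ∑ g ∈ UF G (univ.filter (fun X => f X ≠ 0)), phiMap G f g = 1 := by
  set C₀ : Finset L := univ.filter (fun X => f X ≠ 0) with hC₀
  have hC₀c : C₀ ⊆ c := by
    intro X hX
    simp only [hC₀, mem_filter, mem_univ, true_and] at hX
    exact hsupp X hX
  have hC₀chain : IsChain (· ≤ ·) (C₀ : Set L) := hchain.mono (Finset.coe_subset.mpr hC₀c)
  have hC₀bot : ∀ X ∈ C₀, X ≠ ⊥ := fun X hX => hcbot (Finset.mem_coe.mpr (hC₀c hX))
  have hnested := chain_UF_nested hG hC₀chain hC₀bot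
  refine ⟨hnested, ?_, ?_⟩
  · intro g hg
    by_contra hcon
    apply hg
    rw [phiMap]
    apply Finset.sum_eq_zero
    intro X hX
    simp only [mem_filter, mem_univ, true_and] at hX
    have hfX : f X = 0 := by
      by_contra h
      exact hcon (mem_UF.mpr ⟨X, by simp [hC₀, h], hX⟩)
    rw [hfX, zero_div]
  · have step : ∀ X : L, (∑ g ∈ UF G C₀,
        if g ∈ factorsSet G X then f X / ((Ffin G X).card : ℝ) else 0) = f X := by
      intro X
      rw [← Finset.sum_filter, Finset.sum_const]
      by_cases hfX : f X = 0
      · rw [hfX]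
        simp
      · have hXC₀ : X ∈ C₀ := by simp [hC₀, hfX]
        have hXbot : X ≠ ⊥ := hC₀bot X hXC₀
        have hfind : (UF G C₀).filter (fun g => g ∈ factorsSet G X) = Ffin G X := by
          ext g
          simp only [mem_filter, mem_Ffin]
          exact ⟨fun h => h.2, fun h => ⟨mem_UF.mpr ⟨X, hXC₀, h⟩, h⟩⟩
        have hn0 : ((Ffin G X).card : ℝ) ≠ 0 := by
          obtain ⟨g, hg⟩ := factors_nonempty hG hXbot
          have : 0 < (Ffin G X).card := card_pos.mpr ⟨g, mem_Ffin.mpr hg⟩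
          positivity
        rw [hfind, nsmul_eq_mul, mul_div_cancel₀ _ hn0]
    calc ∑ g ∈ UF G C₀, phiMap G f g
        = ∑ g ∈ UF G C₀, ∑ X ∈ (univ : Finset L),
            (if g ∈ factorsSet G X then f X / ((Ffin G X).card : ℝ) else 0) := by
          refine Finset.sum_congr rfl (fun g _ => ?_)
          rw [phiMap, Finset.sum_filter]
      _ = ∑ X ∈ (univ : Finset L), ∑ g ∈ UF G C₀,
            (if g ∈ factorsSet G X then f X / ((Ffin G X).card : ℝ) else 0) :=
          Finset.sum_comm
      _ = ∑ X ∈ (univ : Finset L), f X := Finset.sum_congr rfl (fun X _ => step X)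
      _ = ∑ X ∈ c, f X := by
          symm
          apply Finset.sum_subset (subset_univ c)
          intro x _ hx
          by_contra h
          exact hx (hsupp x h)
      _ = 1 := hsum

noncomputable def PhiFun (hG : IsBuilding L G) :
    geomReal (orderComplexBot L) → geomReal (nestedComplex G) := fun p =>
  ⟨phiMap G p.1, by
    intro g
    rw [phiMap]
    exact Finset.sum_nonneg (fun X _ => div_nonneg (p.2.1 X) (by positivity)), by
    obtain ⟨hnn, s, hsK, hs1, hs2⟩ := p.2
    obtain ⟨h1, h2, h3⟩ := phiMap_face hG hnn hsK.2 hsK.1 hs1 hs2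
    exact ⟨UF G (univ.filter (fun X => p.1 X ≠ 0)), h1, h2, h3⟩⟩

lemma PhiFun_injective (hG : IsBuilding L G) : Function.Injective (PhiFun hG) := by
  intro p q h
  have hval : phiMap G p.1 = phiMap G q.1 := congrArg Subtype.val h
  obtain ⟨hp0, sp, hspK, hsp1, -⟩ := p.2
  obtain ⟨hq0, sq, hsqK, hsq1, -⟩ := q.2
  have h1 : reconF G (phiMap G p.1) = p.1 :=
    recon_phiMap hG hp0 hspK.2 (fun X hX => hspK.1 (Finset.mem_coe.mpr hX)) hsp1
  have h2 : reconF G (phiMap G q.1) = q.1 :=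
    recon_phiMap hG hq0 hsqK.2 (fun X hX => hsqK.1 (Finset.mem_coe.mpr hX)) hsq1
  apply Subtype.ext
  rw [← h1, ← h2, hval]

lemma PhiFun_surjective (hG : IsBuilding L G) : Function.Surjective (PhiFun hG) := by
  intro q
  obtain ⟨hq0, s, hsK, hs1, hs2⟩ := q.2
  obtain ⟨f, hf0, ⟨c, hcchain, hcbot, hcsupp, hcsum⟩, hphif⟩ :=
    phiMap_surj hG hq0 hsK hs1 hs2
  have hcK : c ∈ orderComplexBot L :=
    ⟨fun x hx => hcbot x (Finset.mem_coe.mp hx), hcchain⟩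
  refine ⟨⟨f, hf0, c, hcK, hcsupp, hcsum⟩, ?_⟩
  apply Subtype.ext
  exact hphif

lemma PhiFun_continuous (hG : IsBuilding L G) : Continuous (PhiFun hG) := by
  apply Continuous.subtype_mk
  apply continuous_pi
  intro g
  simp only [phiMap]
  apply continuous_finset_sum
  intro X _
  exact ((continuous_apply X).comp continuous_subtype_val).div_const _

lemma geomReal_compact (K : Set (Finset L)) : CompactSpace (geomReal K) := by
  suffices h : IsCompact {f : L → ℝ | (∀ v, 0 ≤ f v) ∧ ∃ s ∈ K, (∀ v, f v ≠ 0 → v ∈ s)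
      ∧ ∑ v ∈ s, f v = 1} by
    exact isCompact_iff_compactSpace.mp h
  have heq : {f : L → ℝ | (∀ v, 0 ≤ f v) ∧ ∃ s ∈ K, (∀ v, f v ≠ 0 → v ∈ s)
      ∧ ∑ v ∈ s, f v = 1}
      = ⋃ s ∈ K, {f : L → ℝ | (∀ v, 0 ≤ f v) ∧ (∀ v, f v ≠ 0 → v ∈ s)
        ∧ ∑ v ∈ s, f v = 1} := by
    ext f
    simp only [Set.mem_setOf_eq, Set.mem_iUnion]
    constructor
    · rintro ⟨h1, s, hs, h2, h3⟩
      exact ⟨s, hs, h1, h2, h3⟩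
    · rintro ⟨s, hs, h1, h2, h3⟩
      exact ⟨h1, s, hs, h2, h3⟩
  rw [heq]
  apply Set.Finite.isCompact_biUnion (Set.toFinite K)
  intro s _
  apply IsCompact.of_isClosed_subset (isCompact_univ_pi (fun _ => isCompact_Icc (a := (0:ℝ)) (b := 1)))
  · have hrw : {f : L → ℝ | (∀ v, 0 ≤ f v) ∧ (∀ v, f v ≠ 0 → v ∈ s) ∧ ∑ v ∈ s, f v = 1}
        = {f : L → ℝ | ∀ v, 0 ≤ f v} ∩ ((⋂ (v : L) (_ : v ∉ s), {f : L → ℝ | f v = 0})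
          ∩ {f : L → ℝ | ∑ v ∈ s, f v = 1}) := by
      ext f
      simp only [Set.mem_setOf_eq, Set.mem_inter_iff, Set.mem_iInter]
      constructor
      · rintro ⟨h1, h2, h3⟩
        refine ⟨h1, fun v hv => ?_, h3⟩
        by_contra h
        exact hv (h2 v h)
      · rintro ⟨h1, h2, h3⟩
        refine ⟨h1, fun v hv => ?_, h3⟩
        by_contra h
        exact hv (h2 v h)
    rw [hrw]
    apply IsClosed.inter
    · have : {f : L → ℝ | ∀ v, 0 ≤ f v} = ⋂ (v : L), {f : L → ℝ | 0 ≤ f v} := by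
        ext f; simp [Set.mem_iInter]
      rw [this]
      exact isClosed_iInter (fun v => isClosed_le continuous_const (continuous_apply v))
    apply IsClosed.inter
    · exact isClosed_iInter (fun v => isClosed_iInter (fun _ =>
        isClosed_eq (continuous_apply v) continuous_const))
    · exact isClosed_eq (continuous_finset_sum _ (fun v _ => continuous_apply v))
        continuous_const
  · rintro f ⟨h1, h2, h3⟩
    intro v _
    simp only [Set.mem_Icc]
    refine ⟨h1 v, ?_⟩
    by_cases hv : v ∈ s
    · rw [← h3]
      exact Finset.single_le_sum (fun i _ => h1 i) hv
    · have : f v = 0 := by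
        by_contra h
        exact hv (h2 v h)
      rw [this]
      exact zero_le_one

end


/-- The nested set complex `N(L,G)` is homotopy equivalent to the
order complex `Δ(L \ {⊥})`. -/
theorem stmt6 (L : Type*) [SemilatticeInf L] [OrderBot L] [Fintype L]
    (G : Set L) (hG : IsBuilding L G) :
    Nonempty (ContinuousMap.HomotopyEquiv
      (geomReal (nestedComplex G)) (geomReal (orderComplexBot L))) := by
  classical
  haveI := geomReal_compact (L := L) (orderComplexBot L)
  have hbij : Function.Bijective (PhiFun hG) := ⟨PhiFun_injective hG, PhiFun_surjective hG⟩
  have hcont : Continuous (Equiv.ofBijective (PhiFun hG) hbij) := PhiFun_continuous hG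
  have e := hcont.homeoOfEquivCompactToT2
  exact ⟨e.symm.toHomotopyEquiv⟩
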